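/- arXiv:1710.05119 — 7 statements merged into one kernel-verified Lean document; each statement's English description precedes it below -/
import Mathlib

section
/- If g:(0,2π)→ℝ is measurable, non-negative, non-increasing, and x·g(x) is integrable on (0,2π), then ∫₀^{2π} g(x) sin(x) dx ≥ 0, with equality only if g is constant (almost everywhere). -/
open MeasureTheory Set Real

theorem sine_coeff_nonneg (g : ℝ → ℝ)
    (hmeas : AEMeasurable g (volume.restrict (Ioo 0 (2 * π))))
    (hnn : ∀ x ∈ Ioo 0 (2 * π), 0 ≤ g x)
    (hanti : AntitoneOn g (Ioo 0 (2 * π)))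
    (hint : IntegrableOn (fun x => x * g x) (Ioo 0 (2 * π))) :
    0 ≤ ∫ x in Ioo 0 (2 * π), g x * Real.sin x ∧
      ((∫ x in Ioo 0 (2 * π), g x * Real.sin x) = 0 →
        ∃ c : ℝ, ∀ᵐ x ∂(volume.restrict (Ioo 0 (2 * π))), g x = c) := by
  have hπ : (0:ℝ) < π := Real.pi_pos
  have hπ2 : π < 2 * π := by linarith
  have hπmem : π ∈ Ioo (0:ℝ) (2*π) := ⟨hπ, hπ2⟩
  have hsub1 : Ioo (0:ℝ) π ⊆ Ioo 0 (2*π) := Ioo_subset_Ioo le_rfl hπ2.le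
  have hsub2 : Ioo π (2*π) ⊆ Ioo (0:ℝ) (2*π) := Ioo_subset_Ioo hπ.le le_rfl
  set f : ℝ → ℝ := fun x => g x * Real.sin x with hf
  have hmeasf : AEMeasurable f (volume.restrict (Ioo 0 (2*π))) :=
    hmeas.mul Real.measurable_sin.aemeasurable
  -- integrability of f on Ioo 0 π (dominated by x * g x)
  have hInt1 : IntegrableOn f (Ioo 0 π) := by
    apply Integrable.mono' (hint.mono_set hsub1)
      ((hmeasf.mono_measure (Measure.restrict_mono hsub1 le_rfl)).aestronglyMeasurable)
    filter_upwards [ae_restrict_mem measurableSet_Ioo] with x hx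
    have h1 : 0 ≤ g x := hnn x (hsub1 hx)
    have h2 : 0 ≤ Real.sin x := Real.sin_nonneg_of_nonneg_of_le_pi hx.1.le hx.2.le
    rw [Real.norm_eq_abs, abs_of_nonneg (mul_nonneg h1 h2)]
    calc g x * Real.sin x ≤ g x * x := mul_le_mul_of_nonneg_left (Real.sin_le hx.1.le) h1
      _ = x * g x := mul_comm _ _
  -- integrability of f on Ioo π (2π) (bounded by g π)
  have hInt2 : IntegrableOn f (Ioo π (2*π)) := by
    have hconst : IntegrableOn (fun _ : ℝ => g π) (Ioo π (2*π)) volume :=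
      integrableOn_const measure_Ioo_lt_top.ne
    apply Integrable.mono' hconst
      ((hmeasf.mono_measure (Measure.restrict_mono hsub2 le_rfl)).aestronglyMeasurable)
    filter_upwards [ae_restrict_mem measurableSet_Ioo] with x hx
    have h1 : 0 ≤ g x := hnn x (hsub2 hx)
    have h2 : g x ≤ g π := hanti hπmem (hsub2 hx) hx.1.le
    rw [Real.norm_eq_abs, abs_mul, abs_of_nonneg h1]
    calc g x * |Real.sin x| ≤ g x * 1 :=
          mul_le_mul_of_nonneg_left (abs_sin_le_one x) h1
      _ = g x := mul_one _
      _ ≤ g π := h2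
  have hII1 : IntervalIntegrable f volume 0 π := by
    rw [intervalIntegrable_iff_integrableOn_Ioc_of_le hπ.le,
      integrableOn_Ioc_iff_integrableOn_Ioo]
    exact hInt1
  have hII2 : IntervalIntegrable f volume π (2*π) := by
    rw [intervalIntegrable_iff_integrableOn_Ioc_of_le hπ2.le,
      integrableOn_Ioc_iff_integrableOn_Ioo]
    exact hInt2
  -- the shifted function
  have hshift_eq : ∀ y : ℝ, f (y + π) = -(g (y + π) * Real.sin y) := by
    intro y
    simp [hf, Real.sin_add_pi, mul_neg]
  have hIIshift : IntervalIntegrable (fun y => g (y + π) * Real.sin y) volume 0 π := by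
    have h := (hII2.comp_add_right π)
    have h0 : π - π = (0:ℝ) := by ring
    have h1 : 2 * π - π = π := by ring
    rw [h0, h1] at h
    have : (fun y => g (y + π) * Real.sin y) = fun y => -(f (y + π)) := by
      funext y; rw [hshift_eq y]; ring
    rw [this]
    exact h.neg
  have hIntShift : IntegrableOn (fun y => g (y + π) * Real.sin y) (Ioo 0 π) := by
    rw [← integrableOn_Ioc_iff_integrableOn_Ioo,
      ← intervalIntegrable_iff_integrableOn_Ioc_of_le hπ.le]
    exact hIIshift
  -- key identity
  have key : (∫ x in Ioo 0 (2*π), f x)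
      = ∫ y in Ioo 0 π, (g y - g (y + π)) * Real.sin y := by
    have e1 : (∫ x in Ioo 0 (2*π), f x) = ∫ x in (0:ℝ)..(2*π), f x := by
      rw [intervalIntegral.integral_of_le (by linarith : (0:ℝ) ≤ 2*π),
        integral_Ioc_eq_integral_Ioo]
    have e2 : (∫ x in (0:ℝ)..(2*π), f x)
        = (∫ x in (0:ℝ)..π, f x) + ∫ x in π..(2*π), f x :=
      (intervalIntegral.integral_add_adjacent_intervals hII1 hII2).symm
    have e3 : (∫ x in π..(2*π), f x) = ∫ y in (0:ℝ)..π, f (y + π) := by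
      rw [intervalIntegral.integral_comp_add_right f π]
      norm_num [two_mul]
    have e4 : (∫ y in (0:ℝ)..π, f (y + π))
        = - ∫ y in (0:ℝ)..π, g (y + π) * Real.sin y := by
      rw [← intervalIntegral.integral_neg]
      congr 1
      funext y
      rw [hshift_eq y]
    have e5 : (∫ x in (0:ℝ)..π, f x) - (∫ y in (0:ℝ)..π, g (y + π) * Real.sin y)
        = ∫ y in (0:ℝ)..π, (g y - g (y + π)) * Real.sin y := by
      rw [← intervalIntegral.integral_sub hII1 hIIshift]
      congr 1
      funext y
      simp only [hf]
      ring
    rw [e1, e2, e3, e4, ← sub_eq_add_neg, e5,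
      intervalIntegral.integral_of_le hπ.le, integral_Ioc_eq_integral_Ioo]
  -- pointwise nonneg of the difference integrand
  have hpt : ∀ y ∈ Ioo (0:ℝ) π, 0 ≤ (g y - g (y + π)) * Real.sin y := by
    intro y hy
    have hy2 : y + π ∈ Ioo (0:ℝ) (2*π) := ⟨by linarith [hy.1], by linarith [hy.2]⟩
    have hle : g (y + π) ≤ g y := hanti (hsub1 hy) hy2 (by linarith)
    have hs : 0 ≤ Real.sin y := Real.sin_nonneg_of_nonneg_of_le_pi hy.1.le hy.2.le
    exact mul_nonneg (by linarith) hs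
  constructor
  · rw [key]
    exact setIntegral_nonneg measurableSet_Ioo hpt
  · intro h0
    rw [key] at h0
    -- the difference integrand vanishes a.e. on Ioo 0 π
    have hIntD : Integrable (fun y => (g y - g (y + π)) * Real.sin y)
        (volume.restrict (Ioo 0 π)) := by
      have : (fun y => (g y - g (y + π)) * Real.sin y)
          = fun y => g y * Real.sin y - g (y + π) * Real.sin y := by
        funext y; ring
      rw [this]
      exact hInt1.sub hIntShift
    have hnn' : 0 ≤ᵐ[volume.restrict (Ioo 0 π)] fun y => (g y - g (y + π)) * Real.sin y := by
      filter_upwards [ae_restrict_mem measurableSet_Ioo] with y hy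
      exact hpt y hy
    have hzero := (integral_eq_zero_iff_of_nonneg_ae hnn' hIntD).mp h0
    -- hence g y = g (y + π) a.e. on Ioo 0 π
    have hae : ∀ᵐ y ∂volume, y ∈ Ioo (0:ℝ) π → g y = g (y + π) := by
      have := (ae_restrict_iff' measurableSet_Ioo).mp hzero
      filter_upwards [this] with y hy hymem
      have h := hy hymem
      have hs : 0 < Real.sin y := Real.sin_pos_of_pos_of_lt_pi hymem.1 hymem.2
      have : g y - g (y + π) = 0 := by
        by_contra hne
        exact hne (by
          have := mul_eq_zero.mp h
          rcases this with h' | h'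
          · exact h'
          · exact absurd h' (ne_of_gt hs))
      linarith
    set N : Set ℝ := {y | y ∈ Ioo (0:ℝ) π ∧ g y ≠ g (y + π)} with hN
    have hNnull : volume N = 0 := by
      have : N ⊆ {y | ¬ (y ∈ Ioo (0:ℝ) π → g y = g (y + π))} := by
        intro y hy
        simp only [mem_setOf_eq]
        intro himp
        exact hy.2 (himp hy.1)
      exact measure_mono_null this hae
    refine ⟨g π, ?_⟩
    rw [ae_restrict_iff' measurableSet_Ioo]
    rw [ae_iff]
    apply measure_mono_null (t := N ∪ (fun x => x + (-π)) ⁻¹' N)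
    · intro x hx
      simp only [mem_setOf_eq, _root_.not_imp] at hx
      obtain ⟨hxmem, hxne⟩ := hx
      rcases lt_trichotomy x π with hlt | heq | hgt
      · left
        refine ⟨⟨hxmem.1, hlt⟩, ?_⟩
        intro hgeq
        apply hxne
        have hx2 : x + π ∈ Ioo (0:ℝ) (2*π) := ⟨by linarith [hxmem.1], by linarith⟩
        have h1 : g π ≤ g x := hanti hxmem hπmem hlt.le
        have h2 : g (x + π) ≤ g π := hanti hπmem hx2 (by linarith [hxmem.1])
        linarith [hgeq ▸ h1, h2, hgeq]
      · exact absurd (heq ▸ rfl) hxne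
      · right
        have hy : x - π ∈ Ioo (0:ℝ) π := ⟨by linarith, by linarith [hxmem.2]⟩
        show x + (-π) ∈ N
        have hxp : x + (-π) = x - π := by ring
        rw [hxp]
        refine ⟨hy, ?_⟩
        intro hgeq
        apply hxne
        have hrw : x - π + π = x := by ring
        rw [hrw] at hgeq
        have h1 : g π ≤ g (x - π) := hanti ⟨hy.1, by linarith [hy.2]⟩ hπmem hy.2.le
        have h2 : g x ≤ g π := hanti hπmem hxmem hgt.le
        linarith [hgeq ▸ h1]
    · apply measure_union_null hNnull
      rw [measure_preimage_add_right]
      exact hNnull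
end

section
/- If g:(0,h)→ℝ is measurable, non-negative, non-increasing, with x·g(x) integrable, then for any a>0, ∫₀^{h} g(x) sin(ax) dx ≥ 0. -/
open MeasureTheory Set Real

theorem sine_coeff_nonneg_general (g : ℝ → ℝ) (h a : ℝ) (hh : 0 < h) (ha : 0 < a)
    (hmeas : AEMeasurable g (volume.restrict (Ioo 0 h)))
    (hnn : ∀ x ∈ Ioo 0 h, 0 ≤ g x)
    (hanti : AntitoneOn g (Ioo 0 h))
    (hint : IntegrableOn (fun x => x * g x) (Ioo 0 h)) :
    0 ≤ ∫ x in Ioo 0 h, g x * Real.sin (a * x) := by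
  set G : ℝ → ℝ := Set.indicator (Ioo 0 h) g with hG
  set F : ℝ → ℝ := fun x => G x * Real.sin (a * x) with hF
  have hFind : F = Set.indicator (Ioo 0 h) (fun x => g x * Real.sin (a * x)) := by
    funext x
    by_cases hx : x ∈ Ioo 0 h
    · simp [hF, hG, Set.indicator_of_mem hx]
    · simp [hF, hG, Set.indicator_of_notMem hx]
  -- integrability on Ioo 0 h
  have hmeas2 : AEMeasurable (fun x => g x * Real.sin (a * x))
      (volume.restrict (Ioo 0 h)) :=
    hmeas.mul ((Real.measurable_sin.comp (measurable_const_mul a)).aemeasurable)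
  have hIoo : IntegrableOn (fun x => g x * Real.sin (a * x)) (Ioo 0 h) := by
    refine Integrable.mono' (hint.const_mul a) hmeas2.aestronglyMeasurable ?_
    refine (ae_restrict_iff' measurableSet_Ioo).2 (ae_of_all _ fun x hx => ?_)
    have hg := hnn x hx
    calc |g x * Real.sin (a * x)| = g x * |Real.sin (a * x)| := by
          rw [abs_mul, abs_of_nonneg hg]
      _ ≤ g x * (a * x) := by
          refine mul_le_mul_of_nonneg_left ?_ hg
          calc |Real.sin (a * x)| ≤ |a * x| := Real.abs_sin_le_abs
            _ = a * x := abs_of_nonneg (by have := hx.1; positivity)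
      _ = a * (x * g x) := by ring
  have hFint : Integrable F := by
    rw [hFind]
    exact (integrable_indicator_iff measurableSet_Ioo).2 hIoo
  -- basic properties of G
  have hGnn : ∀ x, 0 ≤ G x := fun x => by
    by_cases hx : x ∈ Ioo 0 h
    · simpa [hG, Set.indicator_of_mem hx] using hnn x hx
    · simp [hG, Set.indicator_of_notMem hx]
  have hGanti : ∀ x y : ℝ, 0 < x → x ≤ y → G y ≤ G x := by
    intro x y hx hxy
    by_cases hy : y ∈ Ioo 0 h
    · have hxm : x ∈ Ioo 0 h := ⟨hx, lt_of_le_of_lt hxy hy.2⟩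
      simpa [hG, Set.indicator_of_mem hy, Set.indicator_of_mem hxm] using
        hanti hxm hy hxy
    · simpa [hG, Set.indicator_of_notMem hy] using hGnn x
  -- the half-period
  set p : ℝ := π / a with hp
  have hppos : 0 < p := div_pos Real.pi_pos ha
  have hap : a * p = π := by rw [hp]; field_simp
  -- key: integral over each full period is nonnegative
  have key : ∀ k : ℕ, 0 ≤ ∫ x in (2 * p * k)..(2 * p * (k + 1)), F x := by
    intro k
    set s : ℝ := 2 * p * k with hs
    have hs0 : 0 ≤ s := by positivity
    have h2 : 2 * p * ((k : ℝ) + 1) = (s + p) + p := by rw [hs]; ring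
    have hI1 : IntervalIntegrable F volume s (s + p) := hFint.intervalIntegrable
    have hI2 : IntervalIntegrable F volume (s + p) ((s + p) + p) := hFint.intervalIntegrable
    have hI3 : IntervalIntegrable (fun x => F (x + p)) volume s (s + p) := by
      have := hI2.comp_add_right p
      simpa using this
    have hsplit : (∫ x in s..(2 * p * (k + 1)), F x)
        = (∫ x in s..(s + p), F x) + ∫ x in (s + p)..((s + p) + p), F x := by
      rw [h2, intervalIntegral.integral_add_adjacent_intervals hI1 hI2]
    have hshift : (∫ x in (s + p)..((s + p) + p), F x)
        = ∫ x in s..(s + p), F (x + p) := by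
      rw [intervalIntegral.integral_comp_add_right F p]
    rw [hsplit, hshift, ← intervalIntegral.integral_add hI1 hI3]
    refine intervalIntegral.integral_nonneg (by linarith) fun u hu => ?_
    -- pointwise nonnegativity on [s, s+p]
    have hsin : Real.sin (a * (u + p)) = -Real.sin (a * u) := by
      rw [mul_add, hap, Real.sin_add_pi]
    have hsin0 : 0 ≤ Real.sin (a * u) := by
      have h1 : a * s = 2 * π * k := by rw [hs, hp]; field_simp
      have : Real.sin (a * u) = Real.sin (a * u - (k : ℤ) * (2 * π)) := by
        rw [← Real.sin_add_int_mul_two_pi (a * u - (k : ℤ) * (2 * π)) k]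
        ring_nf
      rw [this]
      refine Real.sin_nonneg_of_nonneg_of_le_pi ?_ ?_
      · push_cast
        have : 2 * π * k ≤ a * u := h1 ▸ mul_le_mul_of_nonneg_left hu.1 ha.le
        linarith
      · push_cast
        have hup : a * u ≤ a * (s + p) := mul_le_mul_of_nonneg_left hu.2 ha.le
        have : a * (s + p) = 2 * π * k + π := by rw [mul_add, h1, hap]
        linarith
    have heq : F u + F (u + p) = (G u - G (u + p)) * Real.sin (a * u) := by
      simp only [hF, hsin]; ring
    rw [heq]
    rcases eq_or_lt_of_le hu.1 with hus | hus
    · rcases eq_or_lt_of_le hs0 with hs0' | hs0'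
      · -- u = s = 0, sin (a*u) = 0
        have : Real.sin (a * u) = 0 := by rw [← hus, ← hs0']; simp
        simp [this]
      · -- 0 < s = u
        have hu0 : 0 < u := hus ▸ hs0'
        exact mul_nonneg (sub_nonneg.2 (hGanti u (u + p) hu0 (by linarith))) hsin0
    · have hu0 : 0 < u := lt_of_le_of_lt hs0 hus
      exact mul_nonneg (sub_nonneg.2 (hGanti u (u + p) hu0 (by linarith))) hsin0
  -- choose N with h ≤ 2pN
  set N : ℕ := ⌈h / (2 * p)⌉₊ with hN
  set T : ℝ := 2 * p * N with hT
  have hhT : h ≤ T := by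
    have h1 : h / (2 * p) ≤ (N : ℝ) := Nat.le_ceil _
    rw [hT]
    calc h = 2 * p * (h / (2 * p)) := by field_simp
      _ ≤ 2 * p * N := by
          exact mul_le_mul_of_nonneg_left h1 (by positivity)
  have hT0 : 0 ≤ T := le_trans hh.le hhT
  -- sum over periods
  have hsum : (∫ x in (0:ℝ)..T, F x)
      = ∑ k ∈ Finset.range N, ∫ x in (2 * p * k)..(2 * p * (k + 1)), F x := by
    have := intervalIntegral.sum_integral_adjacent_intervals
      (a := fun k : ℕ => 2 * p * k) (n := N) (f := F) (μ := volume)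
      (fun k _ => hFint.intervalIntegrable)
    push_cast at this
    simpa [hT] using this.symm
  have hTnn : 0 ≤ ∫ x in (0:ℝ)..T, F x := by
    rw [hsum]
    exact Finset.sum_nonneg fun k _ => key k
  -- identify integrals
  have hFT : Set.indicator (Ioo 0 T) F = F := by
    funext x
    by_cases hx : x ∈ Ioo 0 T
    · exact Set.indicator_of_mem hx F
    · rw [Set.indicator_of_notMem hx]
      have hx' : x ∉ Ioo 0 h := fun hmem => hx ⟨hmem.1, lt_of_lt_of_le hmem.2 hhT⟩
      rw [hFind]
      exact (Set.indicator_of_notMem hx' _).symm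
  have h2 : (∫ x in (0:ℝ)..T, F x) = ∫ x, F x := by
    rw [intervalIntegral.integral_of_le hT0, integral_Ioc_eq_integral_Ioo,
      ← integral_indicator measurableSet_Ioo, hFT]
  have hfinal : (∫ x in Ioo 0 h, g x * Real.sin (a * x)) = ∫ x, F x := by
    rw [hFind, integral_indicator measurableSet_Ioo]
  rw [hfinal, ← h2]
  exact hTnn
end

section
/- Let u be a 1-periodic square-integrable function on ℝ and ρ_δ a symmetric kernel supported in (−δ,δ) with ρ_δ(|s|)/|s| integrable. Then the Fourier coefficients of the nonlocal gradient G_δ u(x) = ∫₀^δ ρ_δ(s) (u(x+s)−u(x−s))/s ds satisfy (G_δ u)^(k) = i b_δ(k) û(k), where b_δ(k) = 2∫₀^δ (ρ_δ(s)/s) sin(2πks) ds. -/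
open MeasureTheory Set Real

section aux
variable {E : Type*} [NormedAddCommGroup E] [NormedSpace ℝ E]

lemma aux_shift_integral {w : ℝ → E} (hw : Function.Periodic w 1) (s : ℝ) :
    ∫ x in Ioo (0:ℝ) 1, w (x + s) = ∫ x in Ioo (0:ℝ) 1, w x := by
  rw [← MeasureTheory.integral_Ioc_eq_integral_Ioo, ← MeasureTheory.integral_Ioc_eq_integral_Ioo,
    ← intervalIntegral.integral_of_le (by norm_num : (0:ℝ) ≤ 1),
    ← intervalIntegral.integral_of_le (by norm_num : (0:ℝ) ≤ 1),
    intervalIntegral.integral_comp_add_right]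
  have h := hw.intervalIntegral_add_eq s 0
  simpa [add_comm] using h

lemma aux_int_all {w : ℝ → E} (hw : Function.Periodic w 1) (h0 : IntegrableOn w (Ioo 0 1)) :
    ∀ a b : ℝ, IntervalIntegrable w volume a b := by
  have h1 : IntervalIntegrable w volume 0 1 := by
    rwa [intervalIntegrable_iff_integrableOn_Ioo_of_le (by norm_num)]
  have hn : ∀ n : ℤ, IntervalIntegrable w volume n (n + 1) := by
    intro n
    have h2 := h1.comp_add_right (-n : ℝ)
    have heq : (fun x : ℝ => w (x + (-n : ℝ))) = w := by
      funext x
      have := (hw.int_mul (-n)) x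
      simpa using this
    rw [heq] at h2
    simpa [sub_eq_add_neg, add_comm] using h2
  have hm : ∀ (m : ℤ) (j : ℕ), IntervalIntegrable w volume m (m + j) := by
    intro m j
    induction j with
    | zero => simp
    | succ j ih =>
      have : ((m : ℝ) + (j + 1 : ℕ)) = ((m + j : ℤ) : ℝ) + 1 := by push_cast; ring
      rw [this]
      have h3 : IntervalIntegrable w volume ((m + j : ℤ) : ℝ) (((m + j : ℤ) : ℝ) + 1) := hn _
      refine ih.trans ?_
      convert h3 using 2 <;> push_cast <;> ring
  intro a b
  set m : ℤ := ⌊min a b⌋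
  set N : ℤ := ⌈max a b⌉
  have hmN : (m : ℝ) ≤ N := by
    calc (m : ℝ) ≤ min a b := Int.floor_le _
    _ ≤ max a b := min_le_max
    _ ≤ N := Int.le_ceil _
  have hmN' : m ≤ N := by exact_mod_cast hmN
  have key : IntervalIntegrable w volume m N := by
    have := hm m (N - m).toNat
    have hcast : ((m : ℝ) + ((N - m).toNat : ℕ)) = (N : ℝ) := by
      have h4 : ((N - m).toNat : ℤ) = N - m := Int.toNat_of_nonneg (by omega)
      have h5 : ((N - m).toNat : ℝ) = (N : ℝ) - m := by exact_mod_cast congrArg (Int.cast : ℤ → ℝ) h4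
      rw [h5]; ring
    rwa [hcast] at this
  refine key.mono_set ?_
  rw [uIcc_of_le hmN, uIcc_comm]
  refine uIcc_subset_Icc ?_ ?_ <;> constructor
  · calc (m : ℝ) ≤ min a b := Int.floor_le _
    _ ≤ b := min_le_right _ _
  · calc b ≤ max a b := le_max_right _ _
    _ ≤ N := Int.le_ceil _
  · calc (m : ℝ) ≤ min a b := Int.floor_le _
    _ ≤ a := min_le_left _ _
  · calc a ≤ max a b := le_max_left _ _
    _ ≤ N := Int.le_ceil _

lemma aux_shift_integrableOn {w : ℝ → E} (hw : Function.Periodic w 1)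
    (h0 : IntegrableOn w (Ioo 0 1)) (s : ℝ) :
    IntegrableOn (fun x => w (x + s)) (Ioo 0 1) := by
  have h := (aux_int_all hw h0 s (1 + s)).comp_add_right s
  have h2 : IntervalIntegrable (fun x => w (x + s)) volume 0 1 := by
    convert h using 2 <;> ring
  rwa [intervalIntegrable_iff_integrableOn_Ioo_of_le (by norm_num)] at h2

lemma aux_integral_ofReal {μ : Measure ℝ} (f : ℝ → ℝ) :
    ∫ x, (f x : ℂ) ∂μ = ((∫ x, f x ∂μ : ℝ) : ℂ) := integral_ofReal

end aux

theorem fourier_symbol_of_nonlocal_gradient (u ρ : ℝ → ℝ) (δ : ℝ) (hδ : 0 < δ)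
    (hper : Function.Periodic u 1)
    (hL2 : MemLp u 2 (volume.restrict (Ioo (0 : ℝ) 1)))
    (hsym : ∀ s, ρ (-s) = ρ s)
    (hsupp : ∀ s, s ∉ Ioo (-δ) δ → ρ s = 0)
    (hint : IntegrableOn (fun s => ρ |s| / |s|) (Ioo (-δ) δ))
    (k : ℤ) :
    (∫ x in Ioo (0 : ℝ) 1,
        ((∫ s in Ioo 0 δ, ρ s * (u (x + s) - u (x - s)) / s : ℝ) : ℂ) *
          Complex.exp (-2 * π * Complex.I * k * x))
      = Complex.I * ((2 * ∫ s in Ioo 0 δ, ρ s / s * Real.sin (2 * π * k * s) : ℝ) : ℂ) *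
          ∫ x in Ioo (0 : ℝ) 1, (u x : ℂ) * Complex.exp (-2 * π * Complex.I * k * x) := by
  classical
  obtain ⟨g, hg_sm, hug⟩ := hL2.aestronglyMeasurable
  set v : ℝ → ℝ := fun x => g (Int.fract x) with hv_def
  have hv_sm : StronglyMeasurable v := hg_sm.comp_measurable measurable_fract
  have hv_per : Function.Periodic v 1 := fun x => by simp [hv_def, Int.fract_add_one]
  -- u = v almost everywhere on ℝ
  have huv : u =ᵐ[volume] v := by
    have hA : volume ({y | ¬ u y = g y} ∩ Ioo 0 1) = 0 := by
      have h := hug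
      rw [Filter.EventuallyEq, ae_iff] at h
      rwa [Measure.restrict_apply' measurableSet_Ioo] at h
    obtain ⟨B, hAB, hBmeas, hB0⟩ := exists_measurable_superset_of_null hA
    have hBad : volume ((⋃ n : ℤ, (fun x : ℝ => x + (n : ℝ)) ⁻¹' B)
        ∪ Set.range (fun n : ℤ => (n : ℝ))) = 0 := by
      apply measure_union_null
      · apply measure_iUnion_null
        intro n
        rw [measure_preimage_add_right]
        exact hB0
      · exact (Set.countable_range _).measure_zero _
    rw [Filter.EventuallyEq, ae_iff]
    refine measure_mono_null ?_ hBad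
    intro x hx
    simp only [mem_setOf_eq] at hx
    by_contra hxB
    simp only [mem_union, mem_iUnion, mem_preimage, not_or, not_exists] at hxB
    obtain ⟨hx1, hx2⟩ := hxB
    have hfr0 : Int.fract x ≠ 0 := by
      intro h0
      apply hx2
      refine ⟨⌊x⌋, ?_⟩
      have hxf : x - (⌊x⌋ : ℝ) = 0 := by rw [Int.self_sub_floor]; exact h0
      linarith
    have hfrIoo : Int.fract x ∈ Ioo (0:ℝ) 1 :=
      ⟨lt_of_le_of_ne (Int.fract_nonneg x) (Ne.symm hfr0), Int.fract_lt_one x⟩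
    have hfrB : Int.fract x ∉ B := by
      have h := hx1 (-⌊x⌋)
      have : x + ((-⌊x⌋ : ℤ) : ℝ) = Int.fract x := by
        rw [← Int.self_sub_floor]; push_cast; ring
      rwa [this] at h
    have hfrA : Int.fract x ∉ ({y | ¬ u y = g y} ∩ Ioo 0 1) := fun h => hfrB (hAB h)
    have hug_fr : u (Int.fract x) = g (Int.fract x) := by
      by_contra h
      exact hfrA ⟨h, hfrIoo⟩
    have hux : u x = u (Int.fract x) := by
      have h := hper.sub_int_mul_eq (x := x) ⌊x⌋
      rw [mul_one] at h
      rw [← Int.self_sub_floor, h]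
    exact hx (by rw [hux, hug_fr])
  have huv01 : u =ᵐ[volume.restrict (Ioo (0:ℝ) 1)] v := ae_restrict_of_ae huv
  have hv_L2 : MemLp v 2 (volume.restrict (Ioo (0:ℝ) 1)) := hL2.ae_eq huv01
  haveI : IsFiniteMeasure (volume.restrict (Ioo (0:ℝ) 1)) := by
    constructor
    rw [Measure.restrict_apply_univ, Real.volume_Ioo]
    norm_num
  have hv_int : IntegrableOn v (Ioo (0:ℝ) 1) := hv_L2.integrable (by norm_num)
  -- the kernel divided by s
  set q : ℝ → ℝ := fun s => ρ s / s with hq_def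
  have hq_int : IntegrableOn q (Ioo 0 δ) := by
    have h1 : IntegrableOn (fun s => ρ |s| / |s|) (Ioo 0 δ) :=
      hint.mono_set (Ioo_subset_Ioo (by linarith) le_rfl)
    refine h1.congr_fun (fun s hs => ?_) measurableSet_Ioo
    dsimp only
    rw [abs_of_pos hs.1]
  -- the exponential
  set e : ℝ → ℂ := fun x => Complex.exp (-2 * π * Complex.I * k * x) with he_def
  have he_eq : ∀ x : ℝ, e x = Complex.exp (((-(2 * π * k * x) : ℝ) : ℂ) * Complex.I) := by
    intro x; simp only [he_def]
    exact congrArg Complex.exp (by push_cast; ring)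
  have he_norm : ∀ x : ℝ, ‖e x‖ = 1 := by
    intro x; rw [he_eq x, Complex.norm_exp_ofReal_mul_I]
  have he_cont : Continuous e := by
    rw [he_def]
    exact Complex.continuous_exp.comp (by continuity)
  have he_per : Function.Periodic e 1 := by
    intro x
    rw [he_def]
    have h : (-2 * (π:ℂ) * Complex.I * k * (x + 1) : ℂ)
        = -2 * π * Complex.I * k * x + (-k : ℤ) * (2 * π * Complex.I) := by push_cast; ring
    dsimp only
    push_cast
    rw [h, Complex.exp_add, Complex.exp_int_mul_two_pi_mul_I, mul_one]
  have he_add : ∀ x s : ℝ, e (x + s) = e x * e s := by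
    intro x s
    simp only [he_def]
    rw [← Complex.exp_add]
    exact congrArg Complex.exp (by push_cast; ring)
  -- the periodic integrand
  set w : ℝ → ℂ := fun y => (v y : ℂ) * e y with hw_def
  have hw_per : Function.Periodic w 1 := by
    intro x
    simp only [hw_def]
    rw [hv_per x, he_per x]
  have hw_int : IntegrableOn w (Ioo (0:ℝ) 1) := by
    have h := (hv_int.ofReal (𝕜 := ℂ)).bdd_mul
      (he_cont.aestronglyMeasurable.restrict) (c := 1) (Filter.Eventually.of_forall fun x => le_of_eq (he_norm x))
    exact h.congr (Filter.Eventually.of_forall fun x => mul_comm _ _)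
  set c : ℂ := ∫ x in Ioo (0:ℝ) 1, w x with hc_def
  set Ecx : ℝ → ℂ := fun s => Complex.exp (2 * π * Complex.I * k * s) with hEcx_def
  have hEe : ∀ x s : ℝ, (v (x + s) : ℂ) * e x = Ecx s * w (x + s) := by
    intro x s
    simp only [hw_def, hEcx_def, he_def]
    have hexp : Complex.exp (-2 * π * Complex.I * k * (x : ℂ))
        = Complex.exp (2 * π * Complex.I * k * (s : ℂ))
          * Complex.exp (-2 * π * Complex.I * k * ((x : ℝ) + s : ℝ)) := by
      rw [← Complex.exp_add]
      exact congrArg Complex.exp (by push_cast; ring)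
    rw [hexp]; ring
  have key : ∀ s : ℝ, (∫ x in Ioo (0:ℝ) 1, (v (x + s) : ℂ) * e x) = Ecx s * c := by
    intro s
    calc (∫ x in Ioo (0:ℝ) 1, (v (x + s) : ℂ) * e x)
        = ∫ x in Ioo (0:ℝ) 1, Ecx s * w (x + s) := by
          refine setIntegral_congr_fun measurableSet_Ioo fun x _ => ?_
          exact hEe x s
      _ = Ecx s * ∫ x in Ioo (0:ℝ) 1, w (x + s) := by rw [integral_const_mul]
      _ = Ecx s * c := by rw [aux_shift_integral hw_per s]
  have keyneg : ∀ s : ℝ, (∫ x in Ioo (0:ℝ) 1, (v (x - s) : ℂ) * e x) = Ecx (-s) * c := by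
    intro s
    have h := key (-s)
    simpa [sub_eq_add_neg] using h
  -- difference of exponentials
  have hE_sub : ∀ s : ℝ, Ecx s - Ecx (-s) = 2 * Complex.I * ((Real.sin (2 * π * k * s) : ℝ) : ℂ) := by
    intro s
    have h1 : Ecx s = Complex.exp (((2 * π * k * s : ℝ) : ℂ) * Complex.I) := by
      simp only [hEcx_def]
      exact congrArg Complex.exp (by push_cast; ring)
    have h2 : Ecx (-s) = Complex.exp ((-((2 * π * k * s : ℝ) : ℂ)) * Complex.I) := by
      simp only [hEcx_def]
      exact congrArg Complex.exp (by push_cast; ring)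
    rw [h1, h2, Complex.exp_mul_I, Complex.exp_mul_I, Complex.cos_neg, Complex.sin_neg,
      ← Complex.ofReal_sin]
    ring
  -- Fubini setup
  set μ : Measure ℝ := volume.restrict (Ioo (0:ℝ) 1) with hmu
  set ν : Measure ℝ := volume.restrict (Ioo (0:ℝ) δ) with hnu
  set F : ℝ × ℝ → ℂ := fun p =>
    (q p.2 : ℂ) * (((v (p.1 + p.2) : ℝ) : ℂ) - ((v (p.1 - p.2) : ℝ) : ℂ)) * e p.1 with hF_def
  have hq_meas : AEStronglyMeasurable q ν := hq_int.aestronglyMeasurable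
  have hF_meas : AEStronglyMeasurable F (μ.prod ν) := by
    refine AEStronglyMeasurable.mul (AEStronglyMeasurable.mul ?_ (AEStronglyMeasurable.sub ?_ ?_)) ?_
    · exact Complex.continuous_ofReal.comp_aestronglyMeasurable hq_meas.comp_snd
    · exact Complex.continuous_ofReal.comp_aestronglyMeasurable
        ((hv_sm.comp_measurable (measurable_fst.add measurable_snd)).aestronglyMeasurable)
    · exact Complex.continuous_ofReal.comp_aestronglyMeasurable
        ((hv_sm.comp_measurable (measurable_fst.sub measurable_snd)).aestronglyMeasurable)
    · exact (he_cont.comp continuous_fst).aestronglyMeasurable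
  have hshift : ∀ s : ℝ, IntegrableOn (fun x => v (x + s)) (Ioo (0:ℝ) 1) :=
    aux_shift_integrableOn hv_per hv_int
  have hshift' : ∀ s : ℝ, IntegrableOn (fun x => v (x - s)) (Ioo (0:ℝ) 1) := by
    intro s
    have h := hshift (-s)
    simpa [sub_eq_add_neg] using h
  have hslice : ∀ s : ℝ, Integrable (fun x => F (x, s)) μ := by
    intro s
    have hΔ : Integrable (fun x : ℝ => ((v (x + s) : ℂ)) - ((v (x - s) : ℂ))) μ :=
      ((hshift s).ofReal (𝕜 := ℂ)).sub ((hshift' s).ofReal (𝕜 := ℂ))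
    have hb : Integrable
        (fun x : ℝ => ((q s : ℂ) * e x) * (((v (x + s) : ℂ)) - ((v (x - s) : ℂ)))) μ := by
      refine hΔ.bdd_mul ((continuous_const.mul he_cont).aestronglyMeasurable) (c := |q s|) (Filter.Eventually.of_forall fun x => ?_)
      rw [norm_mul, he_norm, mul_one, Complex.norm_real, Real.norm_eq_abs]
    exact hb.congr (Filter.Eventually.of_forall fun x => by simp only [hF_def]; ring)
  set C0 : ℝ := ∫ x in Ioo (0:ℝ) 1, |v x| with hC0_def
  have habs_per : Function.Periodic (fun y => |v y|) 1 := fun x => by simp [hv_per x]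
  have hshift_abs : ∀ s : ℝ, (∫ x in Ioo (0:ℝ) 1, |v (x + s)|) = C0 := fun s =>
    aux_shift_integral habs_per s
  have hnorm_le : ∀ s : ℝ, (∫ x, ‖F (x, s)‖ ∂μ) ≤ |q s| * (C0 + C0) := by
    intro s
    have hdom : Integrable (fun x : ℝ => |q s| * (|v (x + s)| + |v (x - s)|)) μ :=
      (((hshift s).abs.add (hshift' s).abs).const_mul _)
    have hle : ∀ x : ℝ, ‖F (x, s)‖ ≤ |q s| * (|v (x + s)| + |v (x - s)|) := by
      intro x
      simp only [hF_def]
      rw [norm_mul, norm_mul, he_norm, mul_one, Complex.norm_real, Real.norm_eq_abs]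
      have h1 : ‖((v (x + s) : ℝ) : ℂ) - ((v (x - s) : ℝ) : ℂ)‖ ≤ |v (x + s)| + |v (x - s)| := by
        refine (norm_sub_le _ _).trans ?_
        rw [Complex.norm_real, Complex.norm_real, Real.norm_eq_abs, Real.norm_eq_abs]
      exact mul_le_mul_of_nonneg_left h1 (abs_nonneg _)
    calc (∫ x, ‖F (x, s)‖ ∂μ)
        ≤ ∫ x, |q s| * (|v (x + s)| + |v (x - s)|) ∂μ :=
          integral_mono_of_nonneg (Filter.Eventually.of_forall fun x => norm_nonneg _) hdom
            (Filter.Eventually.of_forall hle)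
      _ = |q s| * ((∫ x, |v (x + s)| ∂μ) + ∫ x, |v (x - s)| ∂μ) := by
          rw [integral_const_mul, integral_add ((hshift s).abs) ((hshift' s).abs)]
      _ = |q s| * (C0 + C0) := by
          have h2 : (∫ x, |v (x - s)| ∂μ) = C0 := by
            have h3 := hshift_abs (-s)
            simpa [sub_eq_add_neg] using h3
          have h1' : (∫ x, |v (x + s)| ∂μ) = C0 := hshift_abs s
          rw [h1', h2]
  have hFnorm_meas : AEStronglyMeasurable (fun s => ∫ x, ‖F (x, s)‖ ∂μ) ν := by
    have h := (hF_meas.prod_swap).norm.integral_prod_right'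
    simpa using h
  have hnorm_int : Integrable (fun s => ∫ x, ‖F (x, s)‖ ∂μ) ν := by
    refine Integrable.mono' ((hq_int.abs.mul_const (C0 + C0))) hFnorm_meas ?_
    refine Filter.Eventually.of_forall fun s => ?_
    rw [Real.norm_eq_abs, abs_of_nonneg (integral_nonneg fun x => norm_nonneg _)]
    exact hnorm_le s
  have hF_int : Integrable F (μ.prod ν) :=
    (integrable_prod_iff' hF_meas).mpr ⟨Filter.Eventually.of_forall hslice, hnorm_int⟩
  have hswap : (∫ x, ∫ s, F (x, s) ∂ν ∂μ) = ∫ s, ∫ x, F (x, s) ∂μ ∂ν :=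
    integral_integral_swap hF_int
  -- step 1 : rewrite the LHS as the double integral
  have step1 : (∫ x in Ioo (0 : ℝ) 1,
        ((∫ s in Ioo 0 δ, ρ s * (u (x + s) - u (x - s)) / s : ℝ) : ℂ) *
          Complex.exp (-2 * π * Complex.I * k * x)) = ∫ x, (∫ s, F (x, s) ∂ν) ∂μ := by
    refine integral_congr_ae (Filter.Eventually.of_forall fun x => ?_)
    have hx_inner : (∫ s in Ioo 0 δ, ρ s * (u (x + s) - u (x - s)) / s)
        = ∫ s in Ioo 0 δ, q s * (v (x + s) - v (x - s)) := by
      refine integral_congr_ae ?_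
      have h1 := (measurePreserving_add_left volume x).quasiMeasurePreserving.ae_eq huv
      have h2 := (Measure.measurePreserving_sub_left volume x).quasiMeasurePreserving.ae_eq huv
      filter_upwards [ae_restrict_of_ae h1, ae_restrict_of_ae h2] with s hs1 hs2
      simp only [Function.comp] at hs1 hs2
      show ρ s * (u (x + s) - u (x - s)) / s = q s * (v (x + s) - v (x - s))
      rw [hs1, hs2]
      exact mul_div_right_comm _ _ _
    show ((∫ s in Ioo 0 δ, ρ s * (u (x + s) - u (x - s)) / s : ℝ) : ℂ) *
        Complex.exp (-2 * π * Complex.I * k * x) = ∫ s, F (x, s) ∂ν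
    rw [hx_inner]
    calc ((∫ s in Ioo 0 δ, q s * (v (x + s) - v (x - s)) : ℝ) : ℂ)
          * Complex.exp (-2 * π * Complex.I * k * x)
        = (∫ s in Ioo 0 δ, ((q s * (v (x + s) - v (x - s)) : ℝ) : ℂ)) * e x := by
          rw [← aux_integral_ofReal]
      _ = ∫ s in Ioo 0 δ, ((q s * (v (x + s) - v (x - s)) : ℝ) : ℂ) * e x := by
          rw [← integral_mul_const]
      _ = ∫ s, F (x, s) ∂ν := by
          refine integral_congr_ae (Filter.Eventually.of_forall fun s => ?_)
          simp only [hF_def]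
          push_cast
          ring
  -- step 3 : compute the inner integral after swapping
  have step3 : (∫ s, (∫ x, F (x, s) ∂μ) ∂ν)
      = ∫ s in Ioo 0 δ, (2 * Complex.I * c) * ((q s * Real.sin (2 * π * k * s) : ℝ) : ℂ) := by
    refine integral_congr_ae (Filter.Eventually.of_forall fun s => ?_)
    show (∫ x, F (x, s) ∂μ)
        = (2 * Complex.I * c) * ((q s * Real.sin (2 * π * k * s) : ℝ) : ℂ)
    have hA : Integrable (fun x : ℝ => ((v (x + s) : ℝ) : ℂ) * e x) μ :=
      (((hshift s).ofReal (𝕜 := ℂ)).bdd_mul he_cont.aestronglyMeasurable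
        (c := 1) (Filter.Eventually.of_forall fun x => le_of_eq (he_norm x))).congr
        (Filter.Eventually.of_forall fun x => mul_comm _ _)
    have hB : Integrable (fun x : ℝ => ((v (x - s) : ℝ) : ℂ) * e x) μ :=
      (((hshift' s).ofReal (𝕜 := ℂ)).bdd_mul he_cont.aestronglyMeasurable
        (c := 1) (Filter.Eventually.of_forall fun x => le_of_eq (he_norm x))).congr
        (Filter.Eventually.of_forall fun x => mul_comm _ _)
    have hinner : (∫ x, F (x, s) ∂μ) = (q s : ℂ) * ((Ecx s - Ecx (-s)) * c) := by
      calc (∫ x, F (x, s) ∂μ)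
          = ∫ x, (q s : ℂ) * ((((v (x + s) : ℝ) : ℂ)) * e x - (((v (x - s) : ℝ) : ℂ)) * e x) ∂μ := by
            refine integral_congr_ae (Filter.Eventually.of_forall fun x => ?_)
            simp only [hF_def]; ring
        _ = (q s : ℂ) * ∫ x, ((((v (x + s) : ℝ) : ℂ)) * e x - (((v (x - s) : ℝ) : ℂ)) * e x) ∂μ :=
            integral_const_mul _ _
        _ = (q s : ℂ) * ((∫ x, ((v (x + s) : ℝ) : ℂ) * e x ∂μ) - ∫ x, ((v (x - s) : ℝ) : ℂ) * e x ∂μ) := by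
            rw [integral_sub hA hB]
        _ = (q s : ℂ) * ((Ecx s - Ecx (-s)) * c) := by
            rw [key s, keyneg s]
            ring
    rw [hinner, hE_sub s]
    push_cast
    ring
  -- step 4 : pull out the constants
  have step4 : (∫ s in Ioo 0 δ, (2 * Complex.I * c) * ((q s * Real.sin (2 * π * k * s) : ℝ) : ℂ))
      = (2 * Complex.I * c) * ((∫ s in Ioo 0 δ, q s * Real.sin (2 * π * k * s) : ℝ) : ℂ) := by
    rw [integral_const_mul, ← aux_integral_ofReal]
  have hc_u : (∫ x in Ioo (0:ℝ) 1, (u x : ℂ) * Complex.exp (-2 * π * Complex.I * k * x)) = c := by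
    rw [hc_def]
    refine integral_congr_ae ?_
    filter_upwards [huv01] with x hx
    show (u x : ℂ) * Complex.exp (-2 * π * Complex.I * k * x) = w x
    rw [hx]
  have hq_same : (∫ s in Ioo 0 δ, ρ s / s * Real.sin (2 * π * k * s) : ℝ)
      = ∫ s in Ioo 0 δ, q s * Real.sin (2 * π * k * s) := rfl
  calc (∫ x in Ioo (0 : ℝ) 1,
        ((∫ s in Ioo 0 δ, ρ s * (u (x + s) - u (x - s)) / s : ℝ) : ℂ) *
          Complex.exp (-2 * π * Complex.I * k * x))
      = ∫ x, (∫ s, F (x, s) ∂ν) ∂μ := step1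
    _ = ∫ s, (∫ x, F (x, s) ∂μ) ∂ν := hswap
    _ = ∫ s in Ioo 0 δ, (2 * Complex.I * c) * ((q s * Real.sin (2 * π * k * s) : ℝ) : ℂ) := step3
    _ = (2 * Complex.I * c) * ((∫ s in Ioo 0 δ, q s * Real.sin (2 * π * k * s) : ℝ) : ℂ) := step4
    _ = Complex.I * ((2 * ∫ s in Ioo 0 δ, ρ s / s * Real.sin (2 * π * k * s) : ℝ) : ℂ) *
          ∫ x in Ioo (0 : ℝ) 1, (u x : ℂ) * Complex.exp (-2 * π * Complex.I * k * x) := by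
        rw [hc_u, hq_same]
        push_cast
        ring
end

section
/- Let ρ:(0,1)→ℝ be non-negative with ρ(s)/s non-increasing on (0,1), and let a > π. Then ∫_{π/a}^{1} (ρ(s)/s) sin(as) ds ≤ 0. -/
open MeasureTheory Set Real

private lemma sin_nonneg_aux {a t : ℝ} (ha : 0 < a) (ht : 0 ≤ t) (ht' : t ≤ π / a) :
    0 ≤ Real.sin (a * t) := by
  apply Real.sin_nonneg_of_nonneg_of_le_pi (by positivity)
  have : a * t ≤ a * (π / a) := by nlinarith
  calc a * t ≤ a * (π / a) := this
    _ = π := by field_simp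

private lemma sine_pos_two (a : ℝ) (ha : 0 < a) (T : ℝ) (g : ℝ → ℝ) (hT0 : 0 ≤ T)
    (hT2 : T ≤ 2 * (π / a))
    (hnn : ∀ t ∈ Ioo (0:ℝ) T, 0 ≤ g t)
    (hanti : AntitoneOn g (Ioo (0:ℝ) T))
    (hint : IntervalIntegrable (fun t => g t * Real.sin (a * t)) volume 0 T) :
    0 ≤ ∫ t in (0:ℝ)..T, g t * Real.sin (a * t) := by
  set h := π / a with hh
  have hpi : 0 < π := Real.pi_pos
  have hhpos : 0 < h := by positivity
  have hah : a * h = π := by rw [hh]; field_simp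
  rcases le_or_gt T h with hTh | hTh
  · rw [intervalIntegral.integral_of_le hT0, MeasureTheory.integral_Ioc_eq_integral_Ioo]
    apply setIntegral_nonneg measurableSet_Ioo
    intro t ht
    exact mul_nonneg (hnn t ht) (sin_nonneg_aux ha ht.1.le (ht.2.le.trans hTh))
  · -- h < T ≤ 2h : pairing
    set F := fun t => g t * Real.sin (a * t) with hF
    have hmem : ∀ x : ℝ, 0 ≤ x → x ≤ T → x ∈ uIcc (0:ℝ) T := fun x h1 h2 => by
      rw [uIcc_of_le hT0]; exact ⟨h1, h2⟩
    have hThT : h ≤ T := hTh.le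
    have hTh0 : 0 ≤ T - h := by linarith
    have hThh : T - h ≤ h := by linarith
    have hint1 : IntervalIntegrable F volume 0 h :=
      hint.mono_set (uIcc_subset_uIcc (hmem 0 le_rfl hT0) (hmem h hhpos.le hThT))
    have hint2 : IntervalIntegrable F volume h T :=
      hint.mono_set (uIcc_subset_uIcc (hmem h hhpos.le hThT) (hmem T hT0 le_rfl))
    have hint3 : IntervalIntegrable F volume 0 (T - h) :=
      hint.mono_set (uIcc_subset_uIcc (hmem 0 le_rfl hT0) (hmem (T-h) hTh0 (by linarith)))
    have hint4 : IntervalIntegrable F volume (T - h) h :=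
      hint.mono_set (uIcc_subset_uIcc (hmem (T-h) hTh0 (by linarith)) (hmem h hhpos.le hThT))
    have hsplit : (∫ t in (0:ℝ)..T, F t) = (∫ t in (0:ℝ)..h, F t) + ∫ t in h..T, F t :=
      (intervalIntegral.integral_add_adjacent_intervals hint1 hint2).symm
    have hsplit2 : (∫ t in (0:ℝ)..h, F t) = (∫ t in (0:ℝ)..(T-h), F t) + ∫ t in (T-h)..h, F t :=
      (intervalIntegral.integral_add_adjacent_intervals hint3 hint4).symm
    have hkey : ∀ t : ℝ, F (t + h) = -(g (t + h) * Real.sin (a * t)) := by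
      intro t
      have : a * (t + h) = a * t + π := by rw [mul_add, hah]
      simp [hF, this, Real.sin_add_pi]
    have hshift : (∫ t in h..T, F t) = -∫ t in (0:ℝ)..(T-h), g (t + h) * Real.sin (a * t) := by
      have := intervalIntegral.integral_comp_add_right (a := (0:ℝ)) (b := T - h) F h
      rw [zero_add, sub_add_cancel] at this
      rw [← this]
      simp_rw [hkey]
      rw [intervalIntegral.integral_neg]
    have hintG : IntervalIntegrable (fun t => g (t + h) * Real.sin (a * t)) volume 0 (T - h) := by
      have := (hint2.comp_add_right h).neg
      rw [sub_self] at this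
      apply this.congr
      intro t _
      simp only [Pi.neg_apply]
      rw [hkey t]; ring
    -- nonneg of last piece
    have hlast : 0 ≤ ∫ t in (T-h)..h, F t := by
      rw [intervalIntegral.integral_of_le hThh, MeasureTheory.integral_Ioc_eq_integral_Ioo]
      apply setIntegral_nonneg measurableSet_Ioo
      intro t ht
      exact mul_nonneg (hnn t ⟨lt_of_le_of_lt hTh0 ht.1, lt_of_lt_of_le ht.2 hThT⟩)
        (sin_nonneg_aux ha (hTh0.trans ht.1.le) ht.2.le)
    -- comparison
    have hcomp : (∫ t in (0:ℝ)..(T-h), g (t + h) * Real.sin (a * t))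
        ≤ ∫ t in (0:ℝ)..(T-h), F t := by
      rw [intervalIntegral.integral_of_le hTh0, intervalIntegral.integral_of_le hTh0,
        MeasureTheory.integral_Ioc_eq_integral_Ioo, MeasureTheory.integral_Ioc_eq_integral_Ioo]
      apply setIntegral_mono_on
      · exact ((intervalIntegrable_iff_integrableOn_Ioo_of_le hTh0).mp hintG)
      · exact ((intervalIntegrable_iff_integrableOn_Ioo_of_le hTh0).mp hint3)
      · exact measurableSet_Ioo
      · intro t ht
        have hsin : 0 ≤ Real.sin (a * t) := sin_nonneg_aux ha ht.1.le (ht.2.le.trans hThh)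
        have hmt : t ∈ Ioo (0:ℝ) T := ⟨ht.1, by linarith [ht.2]⟩
        have hmth : t + h ∈ Ioo (0:ℝ) T := ⟨by linarith [ht.1], by linarith [ht.2]⟩
        exact mul_le_mul_of_nonneg_right (hanti hmt hmth (by linarith)) hsin
    rw [hsplit, hsplit2, hshift]
    linarith

private lemma sine_pos_aux (a : ℝ) (ha : 0 < a) (n : ℕ) :
    ∀ T : ℝ, ∀ g : ℝ → ℝ, 0 ≤ T → T ≤ n * (π / a) →
    (∀ t ∈ Ioo (0:ℝ) T, 0 ≤ g t) → AntitoneOn g (Ioo (0:ℝ) T) →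
    IntervalIntegrable (fun t => g t * Real.sin (a * t)) volume 0 T →
    0 ≤ ∫ t in (0:ℝ)..T, g t * Real.sin (a * t) := by
  have hpi : 0 < π := Real.pi_pos
  have hhpos : 0 < π / a := by positivity
  set h := π / a with hh
  induction n with
  | zero =>
    intro T g hT0 hTn _ _ _
    have : T = 0 := le_antisymm (by simpa using hTn) hT0
    simp [this]
  | succ n ih =>
    intro T g hT0 hTn hnn hanti hint
    rcases le_or_gt T (2 * h) with hT2 | hT2
    · exact sine_pos_two a ha T g hT0 hT2 hnn hanti hint
    · set F := fun t => g t * Real.sin (a * t) with hF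
      have hah : a * h = π := by rw [hh]; field_simp
      have h2T : 2 * h ≤ T := hT2.le
      have hmem : ∀ x : ℝ, 0 ≤ x → x ≤ T → x ∈ uIcc (0:ℝ) T := fun x h1 h2 => by
        rw [uIcc_of_le hT0]; exact ⟨h1, h2⟩
      have hint1 : IntervalIntegrable F volume 0 (2 * h) :=
        hint.mono_set (uIcc_subset_uIcc (hmem 0 le_rfl hT0) (hmem (2*h) (by linarith) h2T))
      have hint2 : IntervalIntegrable F volume (2 * h) T :=
        hint.mono_set (uIcc_subset_uIcc (hmem (2*h) (by linarith) h2T) (hmem T hT0 le_rfl))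
      have hsplit : (∫ t in (0:ℝ)..T, F t)
          = (∫ t in (0:ℝ)..(2*h), F t) + ∫ t in (2*h)..T, F t :=
        (intervalIntegral.integral_add_adjacent_intervals hint1 hint2).symm
      have hfirst : 0 ≤ ∫ t in (0:ℝ)..(2*h), F t := by
        apply sine_pos_two a ha (2*h) g (by linarith) le_rfl
        · exact fun t ht => hnn t ⟨ht.1, lt_of_lt_of_le ht.2 h2T⟩
        · exact hanti.mono (Ioo_subset_Ioo le_rfl h2T)
        · exact hint1
      have hkey : ∀ t : ℝ, F (t + 2*h) = g (t + 2*h) * Real.sin (a * t) := by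
        intro t
        have : a * (t + 2*h) = a * t + 2*π := by rw [mul_add, show a * (2*h) = 2*π by rw [mul_comm 2 h, ← mul_assoc, hah]; ring]
        simp [hF, this, Real.sin_add_two_pi]
      have hshift : (∫ t in (2*h)..T, F t)
          = ∫ t in (0:ℝ)..(T - 2*h), g (t + 2*h) * Real.sin (a * t) := by
        have := intervalIntegral.integral_comp_add_right (a := (0:ℝ)) (b := T - 2*h) F (2*h)
        rw [zero_add, sub_add_cancel] at this
        rw [← this]
        simp_rw [hkey]
      have hsecond : 0 ≤ ∫ t in (0:ℝ)..(T - 2*h), g (t + 2*h) * Real.sin (a * t) := by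
        apply ih (T - 2*h) (fun t => g (t + 2*h)) (by linarith)
        · push_cast at hTn ⊢; linarith
        · exact fun t ht => hnn (t + 2*h) ⟨by linarith [ht.1], by linarith [ht.2]⟩
        · intro x hx y hy hxy
          exact hanti ⟨by linarith [hx.1], by linarith [hx.2]⟩
            ⟨by linarith [hy.1], by linarith [hy.2]⟩ (by linarith)
        · have := hint2.comp_add_right (2*h)
          rw [sub_self] at this
          apply this.congr
          intro t _
          exact hkey t
      rw [hsplit, hshift]
      linarith

theorem tail_nonpos (ρ : ℝ → ℝ) (a : ℝ) (ha : π < a)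
    (hnn : ∀ s ∈ Ioo (0 : ℝ) 1, 0 ≤ ρ s)
    (hanti : AntitoneOn (fun s => ρ s / s) (Ioo (0 : ℝ) 1))
    (hint : IntegrableOn (fun s => ρ s / s * Real.sin (a * s)) (Ioo (π / a) 1)) :
    (∫ s in Ioo (π / a) 1, ρ s / s * Real.sin (a * s)) ≤ 0 := by
  have hpi : 0 < π := Real.pi_pos
  have ha0 : 0 < a := hpi.trans ha
  set h := π / a with hh
  have hhpos : 0 < h := by positivity
  have hh1 : h < 1 := by rw [hh]; rw [div_lt_one ha0]; exact ha
  have hah : a * h = π := by rw [hh]; field_simp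
  set F := fun s => ρ s / s * Real.sin (a * s) with hF
  have hFint : IntervalIntegrable F volume h 1 :=
    (intervalIntegrable_iff_integrableOn_Ioo_of_le hh1.le).mpr hint
  have heq : (∫ s in Ioo h 1, F s) = ∫ s in h..(1:ℝ), F s := by
    rw [intervalIntegral.integral_of_le hh1.le, MeasureTheory.integral_Ioc_eq_integral_Ioo]
  have hkey : ∀ t : ℝ, F (t + h) = -(ρ (t + h) / (t + h) * Real.sin (a * t)) := by
    intro t
    have : a * (t + h) = a * t + π := by rw [mul_add, hah]
    simp [hF, this, Real.sin_add_pi]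
  have hshift : (∫ s in h..(1:ℝ), F s)
      = -∫ t in (0:ℝ)..(1 - h), ρ (t + h) / (t + h) * Real.sin (a * t) := by
    have := intervalIntegral.integral_comp_add_right (a := (0:ℝ)) (b := 1 - h) F h
    rw [zero_add, sub_add_cancel] at this
    rw [← this]
    simp_rw [hkey]
    rw [intervalIntegral.integral_neg]
  obtain ⟨n, hn⟩ := exists_nat_ge ((1 - h) / h)
  have hTn : 1 - h ≤ n * h := by
    rw [div_le_iff₀ hhpos] at hn; linarith
  have hpos : 0 ≤ ∫ t in (0:ℝ)..(1 - h), ρ (t + h) / (t + h) * Real.sin (a * t) := by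
    apply sine_pos_aux a ha0 n (1 - h) (fun t => ρ (t + h) / (t + h)) (by linarith) hTn
    · intro t ht
      apply div_nonneg (hnn (t + h) ⟨by linarith [ht.1], by linarith [ht.2]⟩)
      linarith [ht.1]
    · intro x hx y hy hxy
      exact hanti ⟨by linarith [hx.1], by linarith [hx.2]⟩
        ⟨by linarith [hy.1], by linarith [hy.2]⟩ (by linarith)
    · have := (hFint.comp_add_right h).neg
      rw [sub_self] at this
      apply this.congr
      intro t _
      simp only [Pi.neg_apply]
      rw [hkey t]; ring
  rw [heq, hshift]
  linarith
end

section
/- Suppose ρ(s) = c s^{−α} on (0,ε) with c > 0 and α ∈ (0,1), ρ(s)/s non-increasing on (0,1), ρ ≥ 0. Then for a > 2π/ε, 2∫₀¹ (ρ(s)/s) sin(as) ds ≥ c a^{α} ∫₀^{2π} s^{−(1+α)} sin(s) ds, and the constant ∫₀^{2π} s^{−(1+α)} sin(s) ds is strictly positive. -/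
open MeasureTheory Set Real intervalIntegral

private lemma sin_period_nonneg (g : ℝ → ℝ) (n : ℤ) (b u : ℝ)
    (hb : b = n * (2 * π)) (hbu : b ≤ u) (hu : u ≤ b + 2 * π)
    (hg : AntitoneOn g (Icc b u)) (hg0 : ∀ t ∈ Icc b u, 0 ≤ g t)
    (hi : IntervalIntegrable (fun t => g t * Real.sin t) volume b u) :
    0 ≤ ∫ t in b..u, g t * Real.sin t := by
  have hsin : ∀ t : ℝ, Real.sin t = Real.sin (t - b) := by
    intro t
    rw [hb, show t - (n : ℝ) * (2*π) = t + ((-n : ℤ) : ℝ) * (2*π) by push_cast; ring,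
      Real.sin_add_int_mul_two_pi]
  by_cases hcase : u ≤ b + π
  · apply intervalIntegral.integral_nonneg hbu
    intro t ht
    have h1 : 0 ≤ Real.sin t := by
      rw [hsin t]
      exact Real.sin_nonneg_of_nonneg_of_le_pi (by linarith [ht.1]) (by linarith [ht.2])
    exact mul_nonneg (hg0 t ht) h1
  · push_neg at hcase
    set m := u - π with hm
    have hπ := Real.pi_pos
    have hbm : b ≤ m := by simp only [hm]; linarith
    have hmbp : m ≤ b + π := by simp only [hm]; linarith
    have hbpu : b + π ≤ u := by linarith
    -- integrability pieces
    have hi1 : IntervalIntegrable (fun t => g t * Real.sin t) volume b m :=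
      hi.mono_set (by rw [uIcc_of_le hbm, uIcc_of_le hbu]
                      exact Icc_subset_Icc le_rfl (by linarith))
    have hi2 : IntervalIntegrable (fun t => g t * Real.sin t) volume m (b + π) :=
      hi.mono_set (by rw [uIcc_of_le hmbp, uIcc_of_le hbu]
                      exact Icc_subset_Icc hbm (by linarith))
    have hi3 : IntervalIntegrable (fun t => g t * Real.sin t) volume (b + π) u :=
      hi.mono_set (by rw [uIcc_of_le hbpu, uIcc_of_le hbu]
                      exact Icc_subset_Icc (by linarith) le_rfl)
    have hi4 : IntervalIntegrable (fun t => g (t + π) * Real.sin (t + π)) volume b m := by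
      have := hi3.comp_add_right π
      simpa [hm] using this
    have hi5 : IntervalIntegrable (fun t => g (t + π) * Real.sin t) volume b m := by
      have : (fun t => g (t + π) * Real.sin t) = fun t => -(g (t + π) * Real.sin (t + π)) := by
        funext t; rw [Real.sin_add_pi]; ring
      rw [this]; exact hi4.neg
    -- the substitution identity
    have key : (∫ t in (b+π)..u, g t * Real.sin t)
        = -∫ t in b..m, g (t + π) * Real.sin t := by
      have h1 : (∫ t in b..m, g (t + π) * Real.sin (t + π))
          = ∫ t in (b+π)..u, g t * Real.sin t := by
        have := intervalIntegral.integral_comp_add_right (a := b) (b := m)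
          (fun t => g t * Real.sin t) π
        rw [this, hm]; congr 1; ring
      rw [← h1]
      rw [show (∫ t in b..m, g (t + π) * Real.sin (t + π))
          = ∫ t in b..m, -(g (t + π) * Real.sin t) by
        apply intervalIntegral.integral_congr; intro t _; simp only [Real.sin_add_pi, mul_neg, neg_neg]]
      rw [intervalIntegral.integral_neg]
    have split1 : (∫ t in b..u, g t * Real.sin t)
        = (∫ t in b..(b+π), g t * Real.sin t) + ∫ t in (b+π)..u, g t * Real.sin t := by
      rw [intervalIntegral.integral_add_adjacent_intervals (hi1.trans hi2) hi3]
    have split2 : (∫ t in b..(b+π), g t * Real.sin t)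
        = (∫ t in b..m, g t * Real.sin t) + ∫ t in m..(b+π), g t * Real.sin t := by
      rw [intervalIntegral.integral_add_adjacent_intervals hi1 hi2]
    have hA : 0 ≤ ∫ t in b..m, (g t - g (t + π)) * Real.sin t := by
      apply intervalIntegral.integral_nonneg hbm
      intro t ht
      have hsin0 : 0 ≤ Real.sin t := by
        rw [hsin t]
        exact Real.sin_nonneg_of_nonneg_of_le_pi (by linarith [ht.1])
          (by simp only [hm] at ht; linarith [ht.2])
      have hgg : g (t + π) ≤ g t := by
        apply hg ⟨ht.1, by simp only [hm] at ht ⊢; linarith [ht.2]⟩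
          ⟨by linarith [ht.1], by simp only [hm] at ht; linarith [ht.2]⟩ (by linarith)
      exact mul_nonneg (by linarith) hsin0
    have hB : 0 ≤ ∫ t in m..(b+π), g t * Real.sin t := by
      apply intervalIntegral.integral_nonneg hmbp
      intro t ht
      have hsin0 : 0 ≤ Real.sin t := by
        rw [hsin t]
        exact Real.sin_nonneg_of_nonneg_of_le_pi (by linarith [ht.1]) (by linarith [ht.2])
      exact mul_nonneg (hg0 t ⟨by linarith [ht.1], by linarith [ht.2]⟩) hsin0
    have hAeq : (∫ t in b..m, (g t - g (t + π)) * Real.sin t)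
        = (∫ t in b..m, g t * Real.sin t) - ∫ t in b..m, g (t + π) * Real.sin t := by
      rw [← intervalIntegral.integral_sub hi1 hi5]
      congr 1; funext t; ring
    rw [split1, split2, key]
    linarith [hAeq ▸ hA]

private lemma sin_tail_nonneg_aux (k : ℕ) : ∀ (n : ℤ) (g : ℝ → ℝ) (u : ℝ),
    ((n : ℝ) * (2*π)) ≤ u → u ≤ (n : ℝ) * (2*π) + k * (2*π) →
    AntitoneOn g (Icc ((n : ℝ)*(2*π)) u) → (∀ t ∈ Icc ((n : ℝ)*(2*π)) u, 0 ≤ g t) →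
    IntervalIntegrable (fun t => g t * Real.sin t) volume ((n : ℝ)*(2*π)) u →
    0 ≤ ∫ t in ((n : ℝ)*(2*π))..u, g t * Real.sin t := by
  induction k with
  | zero =>
    intro n g u h1 h2 _ _ _
    have : u = (n : ℝ) * (2*π) := le_antisymm (by simpa using h2) h1
    simp [this]
  | succ k ih =>
    intro n g u h1 h2 hg hg0 hi
    have hπ := Real.pi_pos
    set b : ℝ := (n : ℝ) * (2*π) with hbdef
    by_cases hcase : u ≤ b + 2*π
    · exact sin_period_nonneg g n b u rfl h1 hcase hg hg0 hi
    · push_neg at hcase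
      have hb2 : b + 2*π = ((n+1 : ℤ) : ℝ) * (2*π) := by push_cast; ring
      have hsub1 : IntervalIntegrable (fun t => g t * Real.sin t) volume b (b+2*π) :=
        hi.mono_set (by rw [uIcc_of_le (by linarith), uIcc_of_le h1]
                        exact Icc_subset_Icc le_rfl (by linarith))
      have hsub2 : IntervalIntegrable (fun t => g t * Real.sin t) volume (b+2*π) u :=
        hi.mono_set (by rw [uIcc_of_le (by linarith), uIcc_of_le h1]
                        exact Icc_subset_Icc (by linarith) le_rfl)
      have e1 : 0 ≤ ∫ t in b..(b+2*π), g t * Real.sin t :=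
        sin_period_nonneg g n b (b+2*π) rfl (by linarith) le_rfl
          (hg.mono (Icc_subset_Icc le_rfl (by linarith)))
          (fun t ht => hg0 t ⟨ht.1, by linarith [ht.2]⟩) hsub1
      have e2 : 0 ≤ ∫ t in (b+2*π)..u, g t * Real.sin t := by
        have := ih (n+1) g u (by rw [← hb2]; linarith)
          (by rw [← hb2] at *; push_cast at h2 ⊢; linarith)
          (hg.mono (by rw [← hb2]; exact Icc_subset_Icc (by linarith) le_rfl))
          (fun t ht => by rw [← hb2] at ht; exact hg0 t ⟨by linarith [ht.1], ht.2⟩)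
          (by rw [← hb2]; exact hsub2)
        rw [← hb2] at this; exact this
      rw [← intervalIntegral.integral_add_adjacent_intervals hsub1 hsub2]
      linarith

lemma sin_tail_nonneg (g : ℝ → ℝ) (u : ℝ) (hu : 2*π ≤ u)
    (hg : AntitoneOn g (Icc (2*π) u)) (hg0 : ∀ t ∈ Icc (2*π) u, 0 ≤ g t)
    (hi : IntervalIntegrable (fun t => g t * Real.sin t) volume (2*π) u) :
    0 ≤ ∫ t in (2*π)..u, g t * Real.sin t := by
  have hπ := Real.pi_pos
  have h1 : ((1 : ℤ) : ℝ) * (2*π) = 2*π := by norm_num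
  have hk : u ≤ ((1 : ℤ) : ℝ) * (2*π) + (⌈(u - 2*π)/(2*π)⌉₊ : ℝ) * (2*π) := by
    have := Nat.le_ceil ((u - 2*π)/(2*π))
    rw [div_le_iff₀ (by linarith)] at this
    push_cast; linarith
  have := sin_tail_nonneg_aux ⌈(u - 2*π)/(2*π)⌉₊ 1 g u (by rw [h1]; exact hu) hk
    (by rw [h1]; exact hg) (by rw [h1]; exact hg0) (by rw [h1]; exact hi)
  rw [h1] at this; exact this

private lemma rpow_sin_integrable {α : ℝ} (hα : α ∈ Ioo (0:ℝ) 1) (b : ℝ) (hb : 0 ≤ b) :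
    IntervalIntegrable (fun t : ℝ => t ^ (-(1+α)) * Real.sin t) volume 0 b := by
  have hmeas : AEStronglyMeasurable (fun t : ℝ => t ^ (-(1+α)) * Real.sin t) volume := by
    exact ((measurable_id.pow measurable_const).mul Real.measurable_sin).aestronglyMeasurable
  have hint : IntervalIntegrable (fun t : ℝ => t ^ (-α)) volume 0 b :=
    intervalIntegral.intervalIntegrable_rpow' (by linarith [hα.2])
  apply hint.mono_fun hmeas.restrict
  rw [Filter.EventuallyLE, ae_restrict_iff' measurableSet_uIoc]
  filter_upwards with t ht
  rw [uIoc_of_le hb] at ht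
  have ht0 : 0 < t := ht.1
  have h1 : |Real.sin t| ≤ t := le_trans Real.abs_sin_le_abs (le_of_eq (abs_of_pos ht0))
  have : ‖t ^ (-(1+α)) * Real.sin t‖ = t ^ (-(1+α)) * |Real.sin t| := by
    rw [norm_mul, Real.norm_eq_abs, Real.norm_eq_abs, abs_of_pos (Real.rpow_pos_of_pos ht0 _)]
  rw [this, Real.norm_eq_abs, abs_of_pos (Real.rpow_pos_of_pos ht0 _)]
  calc t ^ (-(1+α)) * |Real.sin t| ≤ t ^ (-(1+α)) * t :=
        mul_le_mul_of_nonneg_left h1 (Real.rpow_pos_of_pos ht0 _).le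
    _ = t ^ (-α) := by
        nth_rewrite 2 [show (t : ℝ) = t ^ (1:ℝ) by rw [Real.rpow_one]]
        rw [← Real.rpow_add ht0]
        congr 1; ring

private lemma I_pos {α : ℝ} (hα : α ∈ Ioo (0:ℝ) 1) :
    0 < ∫ t in (0:ℝ)..(2*π), t ^ (-(1+α)) * Real.sin t := by
  have hπ := Real.pi_pos
  set g : ℝ → ℝ := fun t => t ^ (-(1+α)) with hg
  have hJ : IntervalIntegrable (fun t => g t * Real.sin t) volume 0 (2*π) :=
    rpow_sin_integrable hα (2*π) (by linarith)
  have hi1 : IntervalIntegrable (fun t => g t * Real.sin t) volume 0 π :=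
    hJ.mono_set (by rw [uIcc_of_le hπ.le, uIcc_of_le (by linarith)]
                    exact Icc_subset_Icc le_rfl (by linarith))
  have hi3 : IntervalIntegrable (fun t => g t * Real.sin t) volume π (2*π) :=
    hJ.mono_set (by rw [uIcc_of_le (by linarith), uIcc_of_le (by linarith)]
                    exact Icc_subset_Icc (by linarith) le_rfl)
  have hi4 : IntervalIntegrable (fun t => g (t + π) * Real.sin (t + π)) volume 0 π := by
    have h := hi3.comp_add_right π
    rw [show π - π = (0:ℝ) by ring, show 2*π - π = π by ring] at h
    exact h
  have hi5 : IntervalIntegrable (fun t => g (t + π) * Real.sin t) volume 0 π := by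
    have : (fun t => g (t + π) * Real.sin t) = fun t => -(g (t + π) * Real.sin (t + π)) := by
      funext t; rw [Real.sin_add_pi]; ring
    rw [this]; exact hi4.neg
  have key : (∫ t in π..(2*π), g t * Real.sin t)
      = -∫ t in (0:ℝ)..π, g (t + π) * Real.sin t := by
    have h1 : (∫ t in (0:ℝ)..π, g (t + π) * Real.sin (t + π))
        = ∫ t in π..(2*π), g t * Real.sin t := by
      have := intervalIntegral.integral_comp_add_right (a := (0:ℝ)) (b := π)
        (fun t => g t * Real.sin t) π
      rw [this]; norm_num; ring_nf
    rw [← h1]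
    rw [show (∫ t in (0:ℝ)..π, g (t + π) * Real.sin (t + π))
        = ∫ t in (0:ℝ)..π, -(g (t + π) * Real.sin t) by
      apply intervalIntegral.integral_congr; intro t _
      simp only [Real.sin_add_pi, mul_neg, neg_neg]]
    rw [intervalIntegral.integral_neg]
  have split : (∫ t in (0:ℝ)..(2*π), g t * Real.sin t)
      = (∫ t in (0:ℝ)..π, g t * Real.sin t) + ∫ t in π..(2*π), g t * Real.sin t := by
    rw [intervalIntegral.integral_add_adjacent_intervals hi1 hi3]
  have hdiff : (∫ t in (0:ℝ)..π, (g t - g (t + π)) * Real.sin t)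
      = (∫ t in (0:ℝ)..π, g t * Real.sin t) - ∫ t in (0:ℝ)..π, g (t + π) * Real.sin t := by
    rw [← intervalIntegral.integral_sub hi1 hi5]
    congr 1; funext t; ring
  have hpos : 0 < ∫ t in (0:ℝ)..π, (g t - g (t + π)) * Real.sin t := by
    have hieq : (fun t => (g t - g (t + π)) * Real.sin t)
        = fun t => g t * Real.sin t - g (t + π) * Real.sin t := by funext t; ring
    apply intervalIntegral.intervalIntegral_pos_of_pos_on (by rw [hieq]; exact hi1.sub hi5) _ hπ
    intro t ht
    have hsin : 0 < Real.sin t := Real.sin_pos_of_pos_of_lt_pi ht.1 ht.2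
    have hgt : g (t + π) < g t := by
      simp only [hg]
      exact Real.rpow_lt_rpow_of_neg ht.1 (by linarith) (by linarith [hα.1])
    exact mul_pos (by linarith) hsin
  rw [hdiff] at hpos
  rw [split, key]
  linarith


theorem high_frequency_lower_bound (ρ : ℝ → ℝ) (c α ε a : ℝ)
    (hc : 0 < c) (hα : α ∈ Ioo (0 : ℝ) 1) (hε : 0 < ε) (hε1 : ε ≤ 1)
    (hfrac : ∀ s ∈ Ioo 0 ε, ρ s = c * s ^ (-α))
    (hnn : ∀ s ∈ Ioo (0 : ℝ) 1, 0 ≤ ρ s)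
    (hanti : AntitoneOn (fun s => ρ s / s) (Ioo (0 : ℝ) 1))
    (ha : 2 * π / ε < a)
    (hint : IntegrableOn (fun s => ρ s / s * Real.sin (a * s)) (Ioo (0 : ℝ) 1)) :
    c * a ^ α * (∫ s in Ioo 0 (2 * π), s ^ (-(1 + α)) * Real.sin s)
        ≤ 2 * ∫ s in Ioo (0 : ℝ) 1, ρ s / s * Real.sin (a * s) ∧
      0 < ∫ s in Ioo 0 (2 * π), s ^ (-(1 + α)) * Real.sin s := by
  have hπ := Real.pi_pos
  have ha0 : 0 < a := lt_trans (by positivity) ha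
  have haε : 2 * π < a * ε := by
    rw [div_lt_iff₀ hε] at ha; linarith
  have ha2π : 2 * π < a := lt_of_lt_of_le haε (by nlinarith)
  have hfr : 2 * π / a < ε := by rw [div_lt_iff₀ ha0]; linarith
  have hfr0 : 0 < 2 * π / a := by positivity
  have hfr1 : 2 * π / a < 1 := lt_of_lt_of_le hfr hε1
  have hIeq : (∫ s in Ioo 0 (2 * π), s ^ (-(1 + α)) * Real.sin s)
      = ∫ t in (0:ℝ)..(2*π), t ^ (-(1+α)) * Real.sin t := by
    rw [intervalIntegral.integral_of_le (by linarith), integral_Ioc_eq_integral_Ioo]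
  have hJeq : (∫ s in Ioo (0:ℝ) 1, ρ s / s * Real.sin (a * s))
      = ∫ s in (0:ℝ)..1, ρ s / s * Real.sin (a * s) := by
    rw [intervalIntegral.integral_of_le (by norm_num), integral_Ioc_eq_integral_Ioo]
  have hIpos : 0 < ∫ t in (0:ℝ)..(2*π), t ^ (-(1+α)) * Real.sin t := I_pos hα
  refine ⟨?_, by rw [hIeq]; exact hIpos⟩
  have hII : IntervalIntegrable (fun s => ρ s / s * Real.sin (a * s)) volume 0 1 := by
    rw [intervalIntegrable_iff_integrableOn_Ioc_of_le (by norm_num),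
      integrableOn_Ioc_iff_integrableOn_Ioo]
    exact hint
  have hIIhead : IntervalIntegrable (fun s => ρ s / s * Real.sin (a * s)) volume 0 (2*π/a) :=
    hII.mono_set (by rw [uIcc_of_le hfr0.le, uIcc_of_le (by norm_num)]
                     exact Icc_subset_Icc le_rfl hfr1.le)
  have hIItail : IntervalIntegrable (fun s => ρ s / s * Real.sin (a * s)) volume (2*π/a) 1 :=
    hII.mono_set (by rw [uIcc_of_le (by linarith), uIcc_of_le (by norm_num)]
                     exact Icc_subset_Icc hfr0.le le_rfl)
  have hsplit : (∫ s in (0:ℝ)..1, ρ s / s * Real.sin (a * s))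
      = (∫ s in (0:ℝ)..(2*π/a), ρ s / s * Real.sin (a * s))
        + ∫ s in (2*π/a)..1, ρ s / s * Real.sin (a * s) := by
    rw [intervalIntegral.integral_add_adjacent_intervals hIIhead hIItail]
  have hhead : (∫ s in (0:ℝ)..(2*π/a), ρ s / s * Real.sin (a * s))
      = c * a ^ α * ∫ t in (0:ℝ)..(2*π), t ^ (-(1+α)) * Real.sin t := by
    have step1 : (∫ s in (0:ℝ)..(2*π/a), ρ s / s * Real.sin (a * s))
        = ∫ s in (0:ℝ)..(2*π/a), c * s ^ (-(1+α)) * Real.sin (a * s) := by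
      apply intervalIntegral.integral_congr
      intro s hs
      rw [uIcc_of_le hfr0.le] at hs
      rcases eq_or_lt_of_le hs.1 with h0 | h0
      · simp [← h0]
      · have hsε : s ∈ Ioo 0 ε := ⟨h0, lt_of_le_of_lt hs.2 hfr⟩
        have h2 : s ^ (-α) / s = s ^ (-(1+α)) := by
          rw [div_eq_mul_inv, ← Real.rpow_neg_one s, ← Real.rpow_add h0]
          congr 1; ring
        simp only
        rw [hfrac s hsε, mul_div_assoc, h2]
    set F : ℝ → ℝ := fun t => c * (t/a) ^ (-(1+α)) * Real.sin t with hF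
    have step2 : (∫ s in (0:ℝ)..(2*π/a), c * s ^ (-(1+α)) * Real.sin (a * s))
        = ∫ s in (0:ℝ)..(2*π/a), F (a * s) := by
      apply intervalIntegral.integral_congr
      intro s _
      simp only [hF]
      rw [show a * s / a = s by field_simp]
    have step3 : (∫ s in (0:ℝ)..(2*π/a), F (a * s)) = a⁻¹ • ∫ t in (0:ℝ)..(2*π), F t := by
      rw [intervalIntegral.integral_comp_mul_left F ha0.ne',
        show a * (0:ℝ) = 0 by ring, show a * (2*π/a) = 2*π by field_simp]
    have step4 : (∫ t in (0:ℝ)..(2*π), F t)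
        = (c * a ^ (1+α)) * ∫ t in (0:ℝ)..(2*π), t ^ (-(1+α)) * Real.sin t := by
      rw [← intervalIntegral.integral_const_mul]
      apply intervalIntegral.integral_congr
      intro t ht
      rw [uIcc_of_le (by linarith)] at ht
      simp only [hF]
      rw [Real.div_rpow ht.1 ha0.le, Real.rpow_neg ha0.le, div_eq_mul_inv, inv_inv]
      ring
    rw [step1, step2, step3, step4, smul_eq_mul]
    have : a⁻¹ * (c * a ^ (1+α)) = c * a ^ α := by
      rw [Real.rpow_add ha0, Real.rpow_one]
      field_simp
    rw [← mul_assoc, this]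
  have htail : 0 ≤ ∫ s in (2*π/a)..1, ρ s / s * Real.sin (a * s) := by
    set G : ℝ → ℝ := fun t => if t < a then ρ (t/a) / (t/a) else 0 with hG
    have hmem : ∀ t, 2*π ≤ t → t < a → t/a ∈ Ioo (0:ℝ) 1 := by
      intro t ht hta
      constructor
      · have : (0:ℝ) < t := by linarith
        positivity
      · rw [div_lt_one ha0]; exact hta
    have hG0 : ∀ t ∈ Icc (2*π) a, 0 ≤ G t := by
      intro t ht
      simp only [hG]
      split_ifs with h
      · exact div_nonneg (hnn _ (hmem t ht.1 h)) (le_of_lt (div_pos (by linarith [ht.1]) ha0))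
      · exact le_refl 0
    have hGanti : AntitoneOn G (Icc (2*π) a) := by
      intro x hx y hy hxy
      simp only [hG]
      split_ifs with hy' hx' hx'
      · exact hanti (hmem x hx.1 hx') (hmem y hy.1 hy') (by gcongr)
      · exact absurd (lt_of_le_of_lt hxy hy') hx'
      · exact div_nonneg (hnn _ (hmem x hx.1 hx')) (le_of_lt (div_pos (by linarith [hx.1]) ha0))
      · exact le_refl 0
    have hne : ∀ᵐ t : ℝ ∂(volume : Measure ℝ), t ≠ a := by
      rw [ae_iff]
      simpa [not_not, setOf_eq_eq_singleton] using Real.volume_singleton (a := a)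
    have hGint : IntervalIntegrable (fun t => G t * Real.sin t) volume (2*π) a := by
      have h1 := hIItail.comp_mul_left (c := a⁻¹)
      rw [show (2*π/a)/a⁻¹ = 2*π by field_simp, show (1:ℝ)/a⁻¹ = a by field_simp] at h1
      rw [intervalIntegrable_iff, uIoc_of_le ha2π.le] at h1 ⊢
      apply h1.congr
      filter_upwards [ae_restrict_of_ae hne, ae_restrict_mem measurableSet_Ioc] with t hta htm
      have h : t < a := lt_of_le_of_ne htm.2 hta
      simp only [hG]
      rw [if_pos h, inv_mul_eq_div, show a * (t/a) = t by field_simp]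
    have htail0 : 0 ≤ ∫ t in (2*π)..a, G t * Real.sin t :=
      sin_tail_nonneg G a ha2π.le hGanti hG0 hGint
    have hne1 : ∀ᵐ s : ℝ ∂(volume : Measure ℝ), s ≠ 1 := by
      rw [ae_iff]
      simpa [not_not, setOf_eq_eq_singleton] using Real.volume_singleton (a := (1:ℝ))
    have e1 : (∫ s in (2*π/a)..1, ρ s / s * Real.sin (a * s))
        = ∫ s in (2*π/a)..1, (fun t => G t * Real.sin t) (a * s) := by
      apply intervalIntegral.integral_congr_ae
      filter_upwards [hne1] with s hs hsm
      rw [uIoc_of_le (by linarith)] at hsm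
      have hs1 : s < 1 := lt_of_le_of_ne hsm.2 hs
      simp only [hG]
      rw [if_pos (by nlinarith), show a * s / a = s by field_simp]
    have e2 : (∫ s in (2*π/a)..1, (fun t => G t * Real.sin t) (a * s))
        = a⁻¹ • ∫ t in (2*π)..a, G t * Real.sin t := by
      rw [intervalIntegral.integral_comp_mul_left (fun t => G t * Real.sin t) ha0.ne',
        show a * (2*π/a) = 2*π by field_simp, mul_one]
    rw [e1, e2, smul_eq_mul]
    exact mul_nonneg (by positivity) htail0
  rw [hIeq, hJeq, hsplit]
  have h0 : c * a ^ α * ∫ t in (0:ℝ)..(2*π), t ^ (-(1+α)) * Real.sin t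
      ≤ ∫ s in (0:ℝ)..(2*π/a), ρ s / s * Real.sin (a * s) := le_of_eq hhead.symm
  have h1 : 0 ≤ c * a ^ α * ∫ t in (0:ℝ)..(2*π), t ^ (-(1+α)) * Real.sin t :=
    mul_nonneg (by positivity) hIpos.le
  linarith
end

section
/- Under Assumption (fractional kernel): ρ_δ(s)=δ^{−1}ρ(s/δ), ρ even, non-negative, supported in (−1,1), ∫_{−1}^1 ρ = 1, ρ(s)/s non-increasing on (0,1), and ρ(s)=c s^{−α} on (0,ε) for some c>0, α∈(0,1), ε>0. Then there exists C>0 independent of δ (as δ→0) and of k such that the symbol b_δ(k) = 2∫₀^δ (ρ_δ(s)/s) sin(2πks) ds ≥ C for every positive integer k. -/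
open MeasureTheory Set Real

private lemma sub_II {F : ℝ → ℝ} {a b c d : ℝ} (h : IntervalIntegrable F volume a b)
    (h1 : a ≤ c) (h2 : c ≤ d) (h3 : d ≤ b) : IntervalIntegrable F volume c d :=
  h.mono_set (by
    rw [uIcc_of_le h2, uIcc_of_le ((h1.trans h2).trans h3)]
    exact Icc_subset_Icc h1 h3)

private lemma lower_piece {F : ℝ → ℝ} {a b c d K : ℝ} (hab : a ≤ b) (hbc : b ≤ c) (hcd : c ≤ d)
    (hint : IntervalIntegrable F volume a d)
    (hnn : ∀ u ∈ Icc a d, 0 ≤ F u)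
    (hK : ∀ u ∈ Icc b c, K ≤ F u) :
    (c - b) * K ≤ ∫ u in a..d, F u := by
  have i1 : IntervalIntegrable F volume a b := sub_II hint le_rfl hab (hbc.trans hcd)
  have i2 : IntervalIntegrable F volume b c := sub_II hint hab hbc hcd
  have i3 : IntervalIntegrable F volume c d := sub_II hint (hab.trans hbc) hcd le_rfl
  have m1 : 0 ≤ ∫ u in a..b, F u :=
    intervalIntegral.integral_nonneg hab (fun u hu => hnn u ⟨hu.1, hu.2.trans (hbc.trans hcd)⟩)
  have m3 : 0 ≤ ∫ u in c..d, F u :=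
    intervalIntegral.integral_nonneg hcd (fun u hu => hnn u ⟨(hab.trans hbc).trans hu.1, hu.2⟩)
  have m2 : (c - b) * K ≤ ∫ u in b..c, F u := by
    have := intervalIntegral.integral_mono_on hbc intervalIntegrable_const i2 hK
    simpa [intervalIntegral.integral_const, smul_eq_mul] using this
  rw [← intervalIntegral.integral_add_adjacent_intervals (i1.trans i2) i3,
    ← intervalIntegral.integral_add_adjacent_intervals i1 i2]
  linarith

private lemma shift_neg_II {f : ℝ → ℝ} {k : ℕ} (hk : 0 < k) {b : ℝ}
    (hint : IntervalIntegrable (fun s => f s * Real.sin (2*π*k*s)) volume (1/(2*k)) b) :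
    IntervalIntegrable (fun t => f (t + 1/(2*k)) * Real.sin (2*π*k*t)) volume 0 (b - 1/(2*k)) := by
  have hkR : ((k:ℝ)) ≠ 0 := Nat.cast_ne_zero.mpr hk.ne'
  have h1 : IntervalIntegrable
      (fun t => -(f (t + 1/(2*k)) * Real.sin (2*π*(k:ℝ)*(t + 1/(2*k))))) volume 0 (b - 1/(2*k)) := by
    have h := (hint.comp_add_right (1/(2*k))).neg
    rw [sub_self] at h
    exact h
  have heq : (fun t => -(f (t + 1/(2*k)) * Real.sin (2*π*(k:ℝ)*(t + 1/(2*k)))))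
      = fun t => f (t + 1/(2*k)) * Real.sin (2*π*k*t) := by
    funext t
    have : 2*π*(k:ℝ)*(t + 1/(2*k)) = 2*π*k*t + π := by field_simp
    simp only [this, Real.sin_add_pi]; ring
  rwa [heq] at h1

private lemma pairing_eq {f : ℝ → ℝ} {k : ℕ} (hk : 0 < k) {b : ℝ}
    (hb1 : 1/(2*k) ≤ b) (hb2 : b ≤ 1/k)
    (hint : IntervalIntegrable (fun s => f s * Real.sin (2*π*k*s)) volume 0 b) :
    ∫ s in (0:ℝ)..b, f s * Real.sin (2*π*k*s)
      = (∫ t in (0:ℝ)..(b - 1/(2*k)), (f t - f (t + 1/(2*k))) * Real.sin (2*π*k*t))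
        + ∫ t in (b - 1/(2*k))..(1/(2*k)), f t * Real.sin (2*π*k*t) := by
  have hkR : (0:ℝ) < k := Nat.cast_pos.mpr hk
  have hh : (0:ℝ) < 1/(2*k) := by positivity
  have he0 : (0:ℝ) ≤ b - 1/(2*k) := by linarith
  have heh : b - 1/(2*k) ≤ 1/(2*k) := by
    have : (1:ℝ)/k = 1/(2*k) + 1/(2*k) := by field_simp; ring
    linarith [hb2.trans_eq this]
  set F := fun s => f s * Real.sin (2*π*k*s) with hF
  have i1 : IntervalIntegrable F volume 0 (b - 1/(2*k)) :=
    sub_II hint le_rfl he0 (by linarith)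
  have i2 : IntervalIntegrable F volume (b - 1/(2*k)) (1/(2*k)) :=
    sub_II hint he0 heh (by linarith)
  have i3 : IntervalIntegrable F volume (1/(2*k)) b :=
    sub_II hint (by linarith) hb1 le_rfl
  have i4 : IntervalIntegrable (fun t => f (t + 1/(2*k)) * Real.sin (2*π*k*t))
      volume 0 (b - 1/(2*k)) := shift_neg_II hk i3
  have e3 : ∫ s in (1/(2*(k:ℝ)))..b, F s
      = - ∫ t in (0:ℝ)..(b - 1/(2*k)), f (t + 1/(2*k)) * Real.sin (2*π*k*t) := by
    have hcomp : ∫ t in (0:ℝ)..(b - 1/(2*k)), F (t + 1/(2*k)) = ∫ s in (1/(2*(k:ℝ)))..b, F s := by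
      rw [intervalIntegral.integral_comp_add_right]
      norm_num
    rw [← hcomp]
    have : ∀ t, F (t + 1/(2*k)) = -(f (t + 1/(2*k)) * Real.sin (2*π*k*t)) := by
      intro t
      have harg : 2*π*k*(t + 1/(2*k)) = 2*π*k*t + π := by
        have : ((k:ℝ)) ≠ 0 := hkR.ne'
        field_simp
      simp only [hF, harg, Real.sin_add_pi]; ring
    simp only [this, intervalIntegral.integral_neg]
  have esub : ∫ t in (0:ℝ)..(b - 1/(2*k)), (f t - f (t + 1/(2*k))) * Real.sin (2*π*k*t)
      = (∫ t in (0:ℝ)..(b - 1/(2*k)), F t)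
        - ∫ t in (0:ℝ)..(b - 1/(2*k)), f (t + 1/(2*k)) * Real.sin (2*π*k*t) := by
    rw [← intervalIntegral.integral_sub i1 i4]
    congr 1; funext t; simp [hF]; ring
  have split : ∫ s in (0:ℝ)..b, F s
      = (∫ t in (0:ℝ)..(b - 1/(2*k)), F t) + (∫ t in (b - 1/(2*k))..(1/(2*k)), F t)
        + ∫ s in (1/(2*(k:ℝ)))..b, F s := by
    rw [intervalIntegral.integral_add_adjacent_intervals i1 i2,
      intervalIntegral.integral_add_adjacent_intervals (i1.trans i2) i3]
  rw [split, esub, e3]; ring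

private lemma sin_period_nonneg_s11 {k : ℕ} (hk : 0 < k) {t : ℝ} (h0 : 0 ≤ t) (h1 : t ≤ 1/(2*k)) :
    0 ≤ Real.sin (2*π*k*t) := by
  have hkR : (0:ℝ) < k := Nat.cast_pos.mpr hk
  apply Real.sin_nonneg_of_nonneg_of_le_pi
  · positivity
  · have : 2*π*(k:ℝ)*t ≤ 2*π*k*(1/(2*k)) := by
      have h2 : (0:ℝ) < 2*π*k := by positivity
      nlinarith [pi_pos]
    calc 2*π*(k:ℝ)*t ≤ 2*π*k*(1/(2*k)) := this
      _ = π := by field_simp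

private lemma period0 {f : ℝ → ℝ} {k : ℕ} (hk : 0 < k)
    (hanti : AntitoneOn f (Ioi 0)) (hnn : ∀ s, 0 < s → 0 ≤ f s)
    {b : ℝ} (hb0 : 0 ≤ b) (hb1 : b ≤ 1/k)
    (hint : IntervalIntegrable (fun s => f s * Real.sin (2*π*k*s)) volume 0 b) :
    0 ≤ ∫ s in (0:ℝ)..b, f s * Real.sin (2*π*k*s) := by
  have hkR : (0:ℝ) < k := Nat.cast_pos.mpr hk
  rcases le_or_gt b (1/(2*k)) with hb | hb
  · apply intervalIntegral.integral_nonneg hb0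
    intro u hu
    rcases eq_or_lt_of_le hu.1 with h | h
    · simp [← h]
    · exact mul_nonneg (hnn u h) (sin_period_nonneg_s11 hk h.le (hu.2.trans hb))
  · rw [pairing_eq hk hb.le hb1 hint]
    have heh : b - 1/(2*k) ≤ 1/(2*k) := by
      have : (1:ℝ)/k = 1/(2*k) + 1/(2*k) := by field_simp; ring
      linarith [hb1.trans_eq this]
    apply add_nonneg
    · apply intervalIntegral.integral_nonneg (by linarith)
      intro t ht
      rcases eq_or_lt_of_le ht.1 with h | h
      · simp [← h]
      · apply mul_nonneg
        · have := hanti (mem_Ioi.mpr h) (mem_Ioi.mpr (by positivity : (0:ℝ) < t + 1/(2*k)))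
            (by linarith [le_of_lt (by positivity : (0:ℝ) < 1/(2*(k:ℝ)))] : t ≤ t + 1/(2*k))
          linarith
        · exact sin_period_nonneg_s11 hk h.le (ht.2.trans heh)
    · apply intervalIntegral.integral_nonneg heh
      intro t ht
      have ht0 : 0 < t := lt_of_lt_of_le (by linarith) ht.1
      exact mul_nonneg (hnn t ht0) (sin_period_nonneg_s11 hk ht0.le ht.2)

private lemma period_m {f : ℝ → ℝ} {k : ℕ} (hk : 0 < k)
    (hanti : AntitoneOn f (Ioi 0)) (hnn : ∀ s, 0 < s → 0 ≤ f s)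
    (m : ℕ) {b : ℝ} (h0 : (m:ℝ)/k ≤ b) (h1 : b ≤ ((m:ℝ)+1)/k)
    (hint : IntervalIntegrable (fun s => f s * Real.sin (2*π*k*s)) volume ((m:ℝ)/k) b) :
    0 ≤ ∫ s in ((m:ℝ)/k)..b, f s * Real.sin (2*π*k*s) := by
  have hkR : (0:ℝ) < k := Nat.cast_pos.mpr hk
  have hm0 : (0:ℝ) ≤ (m:ℝ)/k := by positivity
  have key : ∀ t : ℝ, Real.sin (2*π*(k:ℝ)*(t + (m:ℝ)/k)) = Real.sin (2*π*(k:ℝ)*t) := by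
    intro t
    have harg : 2*π*(k:ℝ)*(t + (m:ℝ)/k) = 2*π*k*t + (m:ℤ)*(2*π) := by
      push_cast; field_simp
    rw [harg, Real.sin_add_int_mul_two_pi]
  have hcomp := intervalIntegral.integral_comp_add_right (a := 0) (b := b - (m:ℝ)/k)
    (fun s => f s * Real.sin (2*π*(k:ℝ)*s)) ((m:ℝ)/k)
  simp only [zero_add, sub_add_cancel] at hcomp
  rw [← hcomp]
  have hrw : (fun t => f (t + (m:ℝ)/k) * Real.sin (2*π*(k:ℝ)*(t + (m:ℝ)/k)))
      = fun t => f (t + (m:ℝ)/k) * Real.sin (2*π*(k:ℝ)*t) := by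
    funext t; rw [key]
  rw [hrw]
  apply period0 hk (f := fun t => f (t + (m:ℝ)/k))
  · intro x hx y hy hxy
    exact hanti (mem_Ioi.mpr (by have := mem_Ioi.mp hx; linarith))
      (mem_Ioi.mpr (by have := mem_Ioi.mp hy; linarith)) (by linarith)
  · intro s hs; exact hnn _ (by linarith)
  · linarith
  · have : ((m:ℝ)+1)/k = (m:ℝ)/k + 1/k := by ring
    linarith [h1.trans_eq this]
  · have h2 := hint.comp_add_right ((m:ℝ)/k)
    simp only [sub_self] at h2
    rwa [hrw] at h2

private lemma tail_nonneg {f : ℝ → ℝ} {k : ℕ} (hk : 0 < k)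
    (hanti : AntitoneOn f (Ioi 0)) (hnn : ∀ s, 0 < s → 0 ≤ f s)
    (m : ℕ) {b : ℝ} (hmb : (m:ℝ)/k ≤ b)
    (hint : IntervalIntegrable (fun s => f s * Real.sin (2*π*k*s)) volume ((m:ℝ)/k) b) :
    0 ≤ ∫ s in ((m:ℝ)/k)..b, f s * Real.sin (2*π*k*s) := by
  have hkR : (0:ℝ) < k := Nat.cast_pos.mpr hk
  obtain ⟨n, hn⟩ := exists_nat_ge (b * k - m)
  have key : ∀ n : ℕ, ∀ m : ℕ, ∀ b : ℝ, (m:ℝ)/k ≤ b → b ≤ ((m:ℝ)+n)/k →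
      IntervalIntegrable (fun s => f s * Real.sin (2*π*k*s)) volume ((m:ℝ)/k) b →
      0 ≤ ∫ s in ((m:ℝ)/k)..b, f s * Real.sin (2*π*k*s) := by
    intro n
    induction n with
    | zero =>
      intro m b h1 h2 _
      have : b = (m:ℝ)/k := le_antisymm (by simpa using h2) h1
      simp [this]
    | succ n ih =>
      intro m b h1 h2 h3
      rcases le_or_gt b (((m:ℝ)+1)/k) with hc | hc
      · exact period_m hk hanti hnn m h1 hc h3
      · have hstep : (m:ℝ)/k ≤ ((m:ℝ)+1)/k := by
          rw [div_le_div_iff₀ hkR hkR]; nlinarith [hkR]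
        have i1 : IntervalIntegrable (fun s => f s * Real.sin (2*π*k*s)) volume
            ((m:ℝ)/k) (((m:ℝ)+1)/k) := sub_II h3 le_rfl hstep hc.le
        have i2 : IntervalIntegrable (fun s => f s * Real.sin (2*π*k*s)) volume
            (((m:ℝ)+1)/k) b := sub_II h3 hstep hc.le le_rfl
        rw [← intervalIntegral.integral_add_adjacent_intervals i1 i2]
        have hA := period_m hk hanti hnn m hstep le_rfl i1
        have hB : 0 ≤ ∫ s in (((m:ℝ)+1)/k)..b, f s * Real.sin (2*π*k*s) := by
          have hcast : ((m:ℝ)+1) = ((m+1 : ℕ) : ℝ) := by push_cast; ring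
          have harg : b ≤ (((m+1:ℕ)):ℝ)/k + (n:ℝ)/k := by
            have : b ≤ ((m:ℝ) + ((n:ℝ)+1))/k := by push_cast at h2 ⊢; linarith
            rw [← hcast]; linarith [this.trans_eq (by ring : ((m:ℝ) + ((n:ℝ)+1))/k = ((m:ℝ)+1)/k + (n:ℝ)/k)]
          have := ih (m+1) b (by rw [← hcast]; exact hc.le)
            (by rw [add_div]; exact harg) (by rw [hcast] at i2; exact i2)
          rwa [← hcast] at this
        linarith
  apply key n m b hmb ?_ hint
  rw [le_div_iff₀ hkR]
  linarith
set_option maxHeartbeats 4000000 in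
theorem symbol_uniform_lower_bound (ρ : ℝ → ℝ) (c α ε : ℝ)
    (hc : 0 < c) (hα : α ∈ Ioo (0 : ℝ) 1) (hε : 0 < ε)
    (hnn : ∀ s, 0 ≤ ρ s)
    (hsupp : ∀ s, s ∉ Ioo (-1 : ℝ) 1 → ρ s = 0)
    (heven : ∀ s, ρ (-s) = ρ s)
    (hnorm : (∫ s in Ioo (-1 : ℝ) 1, ρ s) = 1)
    (hanti : AntitoneOn (fun s => ρ s / s) (Ioo (0 : ℝ) 1))
    (hfrac : ∀ s ∈ Ioo 0 ε, ρ s = c * s ^ (-α)) :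
    ∃ C > 0, ∀ δ ∈ Ioc (0 : ℝ) 1, ∀ k : ℕ, 0 < k →
      C ≤ 2 * ∫ s in Ioo 0 δ, (δ⁻¹ * ρ (s / δ)) / s * Real.sin (2 * π * k * s) := by
  set ε' : ℝ := min ε 1 with hε'def
  have hε'pos : 0 < ε' := lt_min hε one_pos
  have hε'le1 : ε' ≤ 1 := min_le_right _ _
  have hε'leε : ε' ≤ ε := min_le_left _ _
  set sθ : ℝ := Real.sin (π * ε' / 16) with hsθdef
  have hsθpos : 0 < sθ := by
    apply Real.sin_pos_of_pos_of_lt_pi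
    · positivity
    · nlinarith [pi_pos]
  refine ⟨min ((3*π)/2) (c/4 * sθ), lt_min (by positivity) (by positivity), ?_⟩
  intro δ hδ k hk
  obtain ⟨hδ0, hδ1⟩ := hδ
  have hkR : (0:ℝ) < k := Nat.cast_pos.mpr hk
  have hk1 : (1:ℝ) ≤ k := by exact_mod_cast hk
  -- integrability of ρ
  have hρ_int : IntegrableOn ρ (Ioo (-1:ℝ) 1) := by
    by_contra h
    rw [MeasureTheory.integral_undef h] at hnorm; norm_num at hnorm
  have hρ_int01 : IntegrableOn ρ (Ioo (0:ℝ) 1) :=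
    hρ_int.mono_set (Ioo_subset_Ioo (by norm_num) le_rfl)
  have hρII01 : IntervalIntegrable ρ volume 0 1 := by
    rw [intervalIntegrable_iff_integrableOn_Ioc_of_le (by norm_num)]
    exact hρ_int01.congr_set_ae Ioo_ae_eq_Ioc.symm
  have hρII : IntervalIntegrable ρ volume (-1) 1 := by
    rw [intervalIntegrable_iff_integrableOn_Ioc_of_le (by norm_num)]
    exact hρ_int.congr_set_ae Ioo_ae_eq_Ioc.symm
  -- half mass
  have hhalf : ∫ s in (0:ℝ)..1, ρ s = 1/2 := by
    have h1 : ∫ s in (-1:ℝ)..1, ρ s = 1 := by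
      rw [intervalIntegral.integral_of_le (by norm_num : (-1:ℝ) ≤ 1),
        MeasureTheory.integral_Ioc_eq_integral_Ioo]
      exact hnorm
    have hsplit : (∫ s in (-1:ℝ)..0, ρ s) + ∫ s in (0:ℝ)..1, ρ s = ∫ s in (-1:ℝ)..1, ρ s :=
      intervalIntegral.integral_add_adjacent_intervals
        (sub_II hρII le_rfl (by norm_num) (by norm_num))
        (sub_II hρII (by norm_num) (by norm_num) le_rfl)
    have hrefl : ∫ s in (-1:ℝ)..0, ρ s = ∫ s in (0:ℝ)..1, ρ s := by
      have h2 : ∫ s in (0:ℝ)..1, ρ (-s) = ∫ s in (-1:ℝ)..0, ρ s := by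
        rw [intervalIntegral.integral_comp_neg]; norm_num
      rw [← h2]
      simp only [heven]
    linarith
  -- scaled mass
  have hδne : δ ≠ 0 := hδ0.ne'
  have hscale : ∫ s in (0:ℝ)..δ, δ⁻¹ * ρ (s/δ) = 1/2 := by
    rw [intervalIntegral.integral_const_mul, intervalIntegral.integral_comp_div (f := ρ) hδne]
    rw [zero_div, div_self hδne, hhalf, smul_eq_mul]
    field_simp
  have hgII : IntervalIntegrable (fun s => ρ (s/δ)) volume 0 δ := by
    have h1 := hρII01.comp_mul_left (c := δ⁻¹)
    have e1 : (fun x => ρ (δ⁻¹ * x)) = fun x => ρ (x/δ) := by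
      funext x; rw [← div_eq_inv_mul]
    have e2 : (0:ℝ)/δ⁻¹ = 0 := zero_div _
    have e3 : (1:ℝ)/δ⁻¹ = δ := by field_simp
    rw [e1, e2, e3] at h1
    exact h1
  have hg_Ioc : IntegrableOn (fun s => ρ (s/δ)) (Ioc 0 δ) :=
    (intervalIntegrable_iff_integrableOn_Ioc_of_le hδ0.le).mp hgII
  have hg_int' : IntegrableOn (fun s => δ⁻¹ * ρ (s/δ)) (Ioo 0 δ) :=
    ((hg_Ioc.mono_set Ioo_subset_Ioc_self).const_mul δ⁻¹)
  -- the integrand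
  set f : ℝ → ℝ := fun s => δ⁻¹ * ρ (s / δ) / s with hfdef
  set F : ℝ → ℝ := fun s => f s * Real.sin (2 * π * (k:ℝ) * s) with hFdef
  have hf_nn : ∀ s, 0 < s → 0 ≤ f s := fun s hs =>
    div_nonneg (mul_nonneg (inv_nonneg.mpr hδ0.le) (hnn _)) hs.le
  have hf_anti : AntitoneOn f (Ioi 0) := by
    intro x hx y hy hxy
    have hx0 : (0:ℝ) < x := mem_Ioi.mp hx
    have hy0 : (0:ℝ) < y := mem_Ioi.mp hy
    rcases le_or_gt δ y with h | h
    · have hz : ρ (y/δ) = 0 := hsupp _ (by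
        intro hmem
        have h1 : (1:ℝ) ≤ y/δ := (one_le_div hδ0).mpr h
        exact absurd hmem.2 (not_lt.mpr h1))
      have : f y = 0 := by rw [hfdef]; simp [hz]
      rw [this]; exact hf_nn x hx0
    · have hx' : x/δ ∈ Ioo (0:ℝ) 1 := ⟨div_pos hx0 hδ0, (div_lt_one hδ0).mpr (lt_of_le_of_lt hxy h)⟩
      have hy' : y/δ ∈ Ioo (0:ℝ) 1 := ⟨div_pos hy0 hδ0, (div_lt_one hδ0).mpr h⟩
      have hle : x/δ ≤ y/δ := by gcongr
      have hmono := hanti hx' hy' hle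
      have ex : ∀ z, 0 < z → f z = δ⁻¹ * δ⁻¹ * (ρ (z/δ) / (z/δ)) := by
        intro z hz
        rw [hfdef]
        field_simp
      rw [ex x hx0, ex y hy0]
      have : (0:ℝ) ≤ δ⁻¹ * δ⁻¹ := by positivity
      exact mul_le_mul_of_nonneg_left hmono this
  have hffrac : ∀ s, 0 < s → s < δ*ε' → f s = c * δ^(α-1) * s^(-1-α) := by
    intro s hs hsε
    have hsδ : s/δ ∈ Ioo 0 ε := ⟨div_pos hs hδ0, by
      rw [div_lt_iff₀ hδ0]
      calc s < δ*ε' := hsε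
        _ ≤ ε*δ := by nlinarith⟩
    have h1 : ρ (s/δ) = c * (s/δ)^(-α) := hfrac _ hsδ
    have eδ : δ⁻¹ * (δ^(-α:ℝ))⁻¹ = δ^(α-1) := by
      rw [Real.rpow_neg hδ0.le, inv_inv, ← Real.rpow_neg_one δ, ← Real.rpow_add hδ0]
      ring_nf
    have es : s^(-α:ℝ) * s⁻¹ = s^(-1-α) := by
      rw [← Real.rpow_neg_one s, ← Real.rpow_add hs]
      ring_nf
    calc f s = δ⁻¹ * (c * (s^(-α:ℝ)/δ^(-α:ℝ))) / s := by
          rw [hfdef]; simp only []; rw [h1, Real.div_rpow hs.le hδ0.le]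
      _ = c * (δ⁻¹ * (δ^(-α:ℝ))⁻¹) * (s^(-α:ℝ) * s⁻¹) := by
          rw [div_eq_mul_inv, div_eq_mul_inv]; ring
      _ = c * δ^(α-1) * s^(-1-α) := by rw [eδ, es]
  -- measurability and integrability of F
  have heqF : F = fun s => δ⁻¹ * ρ (s / δ) / s * Real.sin (2 * π * (k:ℝ) * s) := by
    rw [hFdef, hfdef]
  have hFmeas : AEStronglyMeasurable F (volume.restrict (Ioo 0 δ)) := by
    have h1 : AEStronglyMeasurable (fun s => δ⁻¹ * ρ (s/δ)) (volume.restrict (Ioo 0 δ)) :=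
      hg_int'.aestronglyMeasurable
    have h2 : AEStronglyMeasurable (fun s : ℝ => s⁻¹ * Real.sin (2*π*(k:ℝ)*s))
        (volume.restrict (Ioo 0 δ)) := by
      apply Measurable.aestronglyMeasurable
      exact (measurable_inv.mul (Real.measurable_sin.comp (measurable_const.mul measurable_id)))
    have heq2 : F = fun s => (δ⁻¹ * ρ (s/δ)) * (s⁻¹ * Real.sin (2*π*(k:ℝ)*s)) := by
      rw [heqF]; funext s; rw [div_eq_mul_inv]; ring
    rw [heq2]
    exact h1.mul h2
  have hF_int : IntegrableOn F (Ioo 0 δ) := by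
    apply Integrable.mono' (hg_int'.const_mul (2*π*(k:ℝ))) hFmeas
    filter_upwards [ae_restrict_mem measurableSet_Ioo] with s hs
    obtain ⟨hs0, hsδ⟩ := hs
    have hfs : 0 ≤ f s := hf_nn s hs0
    have habs : ‖F s‖ = f s * |Real.sin (2*π*(k:ℝ)*s)| := by
      rw [hFdef]; simp only []
      rw [Real.norm_eq_abs, abs_mul, abs_of_nonneg hfs]
    rw [habs]
    have hb : |Real.sin (2*π*(k:ℝ)*s)| ≤ 2*π*(k:ℝ)*s := by
      calc |Real.sin (2*π*(k:ℝ)*s)| ≤ |2*π*(k:ℝ)*s| := Real.abs_sin_le_abs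
        _ = 2*π*(k:ℝ)*s := abs_of_nonneg (by positivity)
    calc f s * |Real.sin (2*π*(k:ℝ)*s)| ≤ f s * (2*π*(k:ℝ)*s) :=
          mul_le_mul_of_nonneg_left hb hfs
      _ = 2*π*(k:ℝ) * (δ⁻¹ * ρ (s/δ)) := by
          rw [hfdef]; simp only []; field_simp
  have hFII : IntervalIntegrable F volume 0 δ := by
    rw [intervalIntegrable_iff_integrableOn_Ioc_of_le hδ0.le]
    exact hF_int.congr_set_ae Ioo_ae_eq_Ioc.symm
  have hJeq : (∫ s in Ioo (0:ℝ) δ, (δ⁻¹ * ρ (s / δ)) / s * Real.sin (2 * π * (k:ℝ) * s))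
      = ∫ s in (0:ℝ)..δ, F s := by
    rw [intervalIntegral.integral_of_le hδ0.le, MeasureTheory.integral_Ioc_eq_integral_Ioo, heqF]
  have hval : ∫ s in Ioo (0:ℝ) δ, δ⁻¹ * ρ (s/δ) = 1/2 := by
    rw [← MeasureTheory.integral_Ioc_eq_integral_Ioo, ← intervalIntegral.integral_of_le hδ0.le]
    exact hscale
  rcases le_or_gt ((k:ℝ)*δ) (1/8) with hsmall | hbig
  · -- small regime
    apply le_trans (min_le_left _ _)
    have hmono : ∫ s in Ioo (0:ℝ) δ, (3*π*(k:ℝ)/2) * (δ⁻¹ * ρ (s/δ))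
        ≤ ∫ s in Ioo (0:ℝ) δ, F s := by
      apply MeasureTheory.setIntegral_mono_on (hg_int'.const_mul _) hF_int measurableSet_Ioo
      intro s hs
      obtain ⟨hs0, hsδ⟩ := hs
      have hx0 : 0 < 2*π*(k:ℝ)*s := by positivity
      have hx1 : 2*π*(k:ℝ)*s ≤ 1 := by
        have h1 : 2*π*((k:ℝ)*s) ≤ 2*π*((k:ℝ)*δ) := by nlinarith [pi_pos]
        have h2 : 2*π*((k:ℝ)*δ) ≤ 2*π*(1/8) := by nlinarith [pi_pos]
        nlinarith [pi_le_four]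
      have hsin : (3/4) * (2*π*(k:ℝ)*s) ≤ Real.sin (2*π*(k:ℝ)*s) := by
        have h3 := Real.sin_gt_sub_cube hx0
        have hx2 : (2*π*(k:ℝ)*s)^2 ≤ 1 := by nlinarith
        have hx3 : (2*π*(k:ℝ)*s)^3 ≤ (2*π*(k:ℝ)*s) := by nlinarith
        linarith
      have hfs := hf_nn s hs0
      have hre : (3*π*(k:ℝ)/2) * (δ⁻¹ * ρ (s/δ)) = f s * ((3/4)*(2*π*(k:ℝ)*s)) := by
        simp only [hfdef]
        field_simp
        ring
      rw [hre]
      simp only [hFdef]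
      exact mul_le_mul_of_nonneg_left hsin hfs
    have hval2 : ∫ s in Ioo (0:ℝ) δ, (3*π*(k:ℝ)/2) * (δ⁻¹ * ρ (s/δ)) = (3*π*(k:ℝ)/2) * (1/2) := by
      rw [MeasureTheory.integral_const_mul, hval]
    rw [hJeq] at hmono ⊢
    rw [hval2] at hmono
    nlinarith [pi_pos]
  · -- large regime
    apply le_trans (min_le_right _ _)
    rw [hJeq]
    set β : ℝ := min (δ*ε') (1/(2*(k:ℝ))) with hβdef
    have hβpos : 0 < β := lt_min (by positivity) (by positivity)
    have hβδε : β ≤ δ*ε' := min_le_left _ _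
    have hβk : β ≤ 1/(2*(k:ℝ)) := min_le_right _ _
    have hβδ : β ≤ δ := hβδε.trans (by nlinarith)
    have hδpow : (0:ℝ) < δ^(α-1) := Real.rpow_pos_of_pos hδ0 _
    have hβpow : (0:ℝ) < β^(-1-α:ℝ) := Real.rpow_pos_of_pos hβpos _
    set U : ℝ := c * δ^(α-1) * β^(-1-α:ℝ) with hUdef
    have hUpos : 0 < U := by rw [hUdef]; positivity
    have hf_lower : ∀ s, β/4 ≤ s → s ≤ β/2 → 2*U ≤ f s := by
      intro s h1 h2
      have hs0 : 0 < s := lt_of_lt_of_le (by positivity) h1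
      have hsδε : s < δ*ε' := by nlinarith
      rw [hffrac s hs0 hsδε]
      have hmono : (β/2)^(-1-α:ℝ) ≤ s^(-1-α:ℝ) :=
        Real.rpow_le_rpow_of_nonpos hs0 h2 (by linarith [hα.1])
      have h2pow : 2 * β^(-1-α:ℝ) ≤ (β/2)^(-1-α:ℝ) := by
        have hrw : ((β:ℝ)/2)^(-1-α:ℝ) = β^(-1-α:ℝ) * 2^(1+α:ℝ) := by
          rw [Real.div_rpow hβpos.le (by norm_num : (0:ℝ) ≤ 2),
            show (-1-α:ℝ) = -(1+α) by ring, Real.rpow_neg (by norm_num : (0:ℝ) ≤ 2)]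
          field_simp
        rw [hrw]
        have h2a : (2:ℝ) ≤ 2^(1+α:ℝ) := by
          calc (2:ℝ) = 2^(1:ℝ) := (Real.rpow_one 2).symm
            _ ≤ 2^(1+α:ℝ) := Real.rpow_le_rpow_of_exponent_le (by norm_num) (by linarith [hα.1.le])
        nlinarith [hβpow]
      calc 2*U = c * δ^(α-1) * (2 * β^(-1-α:ℝ)) := by rw [hUdef]; ring
        _ ≤ c * δ^(α-1) * (β/2)^(-1-α:ℝ) := by nlinarith [mul_pos hc hδpow]
        _ ≤ c * δ^(α-1) * s^(-1-α:ℝ) := by nlinarith [mul_pos hc hδpow]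
    have hf_upper : ∀ s', 7/8*β ≤ s' → f s' ≤ 3/2 * U := by
      intro s' h
      have h78 : (0:ℝ) < 7/8*β := by positivity
      have hstep : f s' ≤ f (7/8*β) :=
        hf_anti (mem_Ioi.mpr h78) (mem_Ioi.mpr (lt_of_lt_of_le h78 h)) h
      apply hstep.trans
      rw [hffrac _ h78 (by nlinarith)]
      have hkey : ((7:ℝ)/8*β)^(-1-α:ℝ) ≤ (64/49) * β^(-1-α:ℝ) := by
        rw [Real.mul_rpow (by norm_num : (0:ℝ) ≤ 7/8) hβpos.le]
        have e1 : ((7:ℝ)/8)^(-1-α:ℝ) = ((8:ℝ)/7)^(1+α:ℝ) := by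
          rw [show (-1-α:ℝ) = -(1+α) by ring, Real.rpow_neg (by norm_num : (0:ℝ) ≤ 7/8),
            ← Real.inv_rpow (by norm_num : (0:ℝ) ≤ 7/8)]
          norm_num
        have e2 : ((8:ℝ)/7)^(1+α:ℝ) ≤ ((8:ℝ)/7)^(2:ℝ) :=
          Real.rpow_le_rpow_of_exponent_le (by norm_num) (by linarith [hα.2.le])
        have e3 : ((8:ℝ)/7)^(2:ℝ) = 64/49 := by
          rw [show (2:ℝ) = ((2:ℕ):ℝ) by norm_num, Real.rpow_natCast]
          norm_num
        rw [e1]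
        nlinarith [hβpow]
      calc c * δ^(α-1) * ((7:ℝ)/8*β)^(-1-α:ℝ) ≤ c * δ^(α-1) * ((64/49) * β^(-1-α:ℝ)) := by
            nlinarith [mul_pos hc hδpow]
        _ ≤ 3/2 * U := by rw [hUdef]; nlinarith [mul_pos (mul_pos hc hδpow) hβpow]
    have hsin_band : ∀ s, β/4 ≤ s → s ≤ β/2 → sθ ≤ Real.sin (2*π*(k:ℝ)*s) := by
      intro s h1 h2
      have hkβ2 : (k:ℝ)*β ≤ 1/2 := by
        have h5 : (k:ℝ)*β ≤ (k:ℝ)*(1/(2*k)) := mul_le_mul_of_nonneg_left hβk hkR.le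
        have h6 : (k:ℝ)*(1/(2*(k:ℝ))) = 1/2 := by field_simp
        linarith
      have hx2 : 2*π*(k:ℝ)*s ≤ π/2 := by
        have hA : 2*π*(k:ℝ)*s ≤ 2*π*(k:ℝ)*(β/2) := by
          have h9 : (0:ℝ) ≤ 2*π*(k:ℝ) := by positivity
          nlinarith
        have hB : π*((k:ℝ)*β) ≤ π*(1/2) := mul_le_mul_of_nonneg_left hkβ2 pi_pos.le
        nlinarith
      have hkβ1 : ε'/8 ≤ (k:ℝ)*β := by
        rcases min_choice (δ*ε') (1/(2*(k:ℝ))) with he | he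
        · rw [hβdef, he]
          have h9 := mul_le_mul_of_nonneg_left hbig.le hε'pos.le
          nlinarith
        · rw [hβdef, he]
          have h6 : (k:ℝ)*(1/(2*(k:ℝ))) = 1/2 := by field_simp
          linarith [hε'le1]
      have hx1 : π * ε' / 16 ≤ 2*π*(k:ℝ)*s := by
        have hA : 2*π*(k:ℝ)*(β/4) ≤ 2*π*(k:ℝ)*s := by
          have h9 : (0:ℝ) ≤ 2*π*(k:ℝ) := by positivity
          nlinarith
        have hB : π*(ε'/8) ≤ π*((k:ℝ)*β) := mul_le_mul_of_nonneg_left hkβ1 pi_pos.le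
        nlinarith
      rw [hsθdef]
      exact Real.sin_le_sin_of_le_of_le_pi_div_two (by nlinarith [pi_pos, hε'pos.le]) hx2 hx1
    have hband_F : ∀ u ∈ Icc (β/4) (β/2), U/2*sθ ≤ F u := by
      intro u hu
      have h2U := hf_lower u hu.1 hu.2
      have hs := hsin_band u hu.1 hu.2
      have hfu : 0 ≤ f u := le_trans (by positivity) h2U
      have h1 : U/2 * sθ ≤ (2*U) * sθ := by nlinarith [hsθpos.le, hUpos]
      apply h1.trans
      simp only [hFdef]
      exact mul_le_mul h2U hs hsθpos.le hfu
    have hband_G : ∀ u ∈ Icc (β/4) (β/2),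
        U/2*sθ ≤ (f u - f (u + 1/(2*(k:ℝ)))) * Real.sin (2*π*(k:ℝ)*u) := by
      intro u hu
      have h2U := hf_lower u hu.1 hu.2
      have hup : f (u + 1/(2*(k:ℝ))) ≤ 3/2*U := by
        apply hf_upper
        linarith [hβk, hu.1, hβpos]
      have hdiff : U/2 ≤ f u - f (u + 1/(2*(k:ℝ))) := by linarith
      have hs := hsin_band u hu.1 hu.2
      calc U/2*sθ ≤ (f u - f (u + 1/(2*(k:ℝ)))) * sθ := by nlinarith [hsθpos]
        _ ≤ _ := mul_le_mul_of_nonneg_left hs (by linarith)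
    have hF_nn : ∀ u, 0 ≤ u → u ≤ 1/(2*(k:ℝ)) → 0 ≤ F u := by
      intro u h0 h1
      rcases eq_or_lt_of_le h0 with h | h
      · simp [hFdef, ← h]
      · simp only [hFdef]
        exact mul_nonneg (hf_nn u h) (sin_period_nonneg_s11 hk h.le h1)
    set b₁ : ℝ := min δ (1/(k:ℝ)) with hb₁def
    have hb₁pos : 0 < b₁ := lt_min hδ0 (by positivity)
    have hb₁δ : b₁ ≤ δ := min_le_left _ _
    have hb₁k : b₁ ≤ 1/(k:ℝ) := min_le_right _ _
    have h2kk : 1/(2*(k:ℝ)) ≤ 1/(k:ℝ) := by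
      rw [div_le_div_iff₀ (by positivity) hkR]; nlinarith
    have hFIIb₁ : IntervalIntegrable F volume 0 b₁ := sub_II hFII le_rfl hb₁pos.le hb₁δ
    have hβ2b : β/2 ≤ 1/(2*(k:ℝ)) := by linarith [hβk, hβpos]
    have htail : 0 ≤ ∫ s in b₁..δ, F s := by
      rcases le_or_gt δ (1/(k:ℝ)) with h | h
      · have hb1 : b₁ = δ := min_eq_left h
        rw [hb1]; simp
      · have hb1 : b₁ = 1/(k:ℝ) := min_eq_right h.le
        rw [hb1]
        have hint1 : IntervalIntegrable (fun s => f s * Real.sin (2*π*(k:ℝ)*s)) volume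
            (((1:ℕ):ℝ)/(k:ℝ)) δ := by
          have := sub_II hFII (by positivity : (0:ℝ) ≤ 1/(k:ℝ)) h.le le_rfl
          simp only [hFdef] at this
          simpa using this
        have := tail_nonneg (f := f) hk hf_anti hf_nn 1 (by simpa using h.le) hint1
        simp only [hFdef]
        simpa using this
    have hfront : β/4 * (U/2*sθ) ≤ ∫ s in (0:ℝ)..b₁, F s := by
      rcases le_or_gt δ (1/(2*(k:ℝ))) with hcase | hcase
      · have hb1 : b₁ = δ := min_eq_left (hcase.trans h2kk)
        have hband_sub : β/2 ≤ b₁ := by rw [hb1]; nlinarith [hβδ, hβpos]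
        have hlp := lower_piece (F := F) (K := U/2*sθ)
          (by positivity : (0:ℝ) ≤ β/4) (by linarith [hβpos]) hband_sub hFIIb₁
          (fun u hu => hF_nn u hu.1 (le_trans hu.2 (by rw [hb1]; exact hcase)))
          hband_F
        calc β/4 * (U/2*sθ) = (β/2 - β/4) * (U/2*sθ) := by ring
          _ ≤ _ := hlp
      · have h12k : 1/(2*(k:ℝ)) ≤ b₁ := le_min hcase.le h2kk
        have hpair := pairing_eq (f := f) hk h12k hb₁k (by simpa only [hFdef] using hFIIb₁)
        simp only [hFdef]
        rw [hpair]
        set e : ℝ := b₁ - 1/(2*(k:ℝ)) with hedef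
        have he0 : 0 ≤ e := by rw [hedef]; linarith
        have heh : e ≤ 1/(2*(k:ℝ)) := by
          have h7 : (1:ℝ)/(k:ℝ) = 1/(2*(k:ℝ)) + 1/(2*(k:ℝ)) := by field_simp; ring
          rw [hedef]; linarith [hb₁k]
        have iG : IntervalIntegrable
            (fun t => (f t - f (t + 1/(2*(k:ℝ)))) * Real.sin (2*π*(k:ℝ)*t)) volume 0 e := by
          have i1 : IntervalIntegrable F volume 0 e := sub_II hFIIb₁ le_rfl he0 (by
            have h9 : (0:ℝ) < 1/(2*(k:ℝ)) := by positivity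
            rw [hedef]; linarith)
          have i3 : IntervalIntegrable F volume (1/(2*(k:ℝ))) b₁ :=
            sub_II hFIIb₁ (by positivity) h12k le_rfl
          have i4 := shift_neg_II (f := f) hk (by simpa only [hFdef] using i3)
          have i5 := (by simpa only [hFdef] using i1 :
            IntervalIntegrable (fun s => f s * Real.sin (2*π*(k:ℝ)*s)) volume 0 e).sub i4
          have heq : (fun t => f t * Real.sin (2*π*(k:ℝ)*t)
                - f (t + 1/(2*(k:ℝ))) * Real.sin (2*π*(k:ℝ)*t))
              = fun t => (f t - f (t + 1/(2*(k:ℝ)))) * Real.sin (2*π*(k:ℝ)*t) := by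
            funext t; ring
          rwa [heq] at i5
        have iB : IntervalIntegrable F volume e (1/(2*(k:ℝ))) :=
          sub_II hFIIb₁ he0 heh (by linarith)
        have hG_nn : ∀ u ∈ Icc (0:ℝ) e,
            0 ≤ (f u - f (u + 1/(2*(k:ℝ)))) * Real.sin (2*π*(k:ℝ)*u) := by
          intro u hu
          rcases eq_or_lt_of_le hu.1 with h | h
          · simp [← h]
          · apply mul_nonneg
            · have h8 := hf_anti (mem_Ioi.mpr h) (mem_Ioi.mpr (by positivity))
                (by linarith [le_of_lt (by positivity : (0:ℝ) < 1/(2*(k:ℝ)))] :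
                  u ≤ u + 1/(2*(k:ℝ)))
              linarith
            · exact sin_period_nonneg_s11 hk h.le (hu.2.trans heh)
        have hKpos : 0 < U/2*sθ := mul_pos (half_pos hUpos) hsθpos
        rcases le_or_gt e (β/4) with he1 | he1
        · have hA : 0 ≤ ∫ t in (0:ℝ)..e, (f t - f (t + 1/(2*(k:ℝ)))) * Real.sin (2*π*(k:ℝ)*t) :=
            intervalIntegral.integral_nonneg he0 hG_nn
          have hB := lower_piece (F := fun s => f s * Real.sin (2*π*(k:ℝ)*s)) (K := U/2*sθ)
            he1 (by linarith [hβpos]) hβ2b (by simpa only [hFdef] using iB)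
            (fun u hu => by
              have := hF_nn u (le_trans he0 hu.1) hu.2
              simpa only [hFdef] using this)
            (fun u hu => by
              have := hband_F u hu
              simpa only [hFdef] using this)
          calc β/4 * (U/2*sθ) = (β/2 - β/4) * (U/2*sθ) := by ring
            _ ≤ _ := by linarith [hA, hB]
        · rcases le_or_gt (β/2) e with he2 | he2
          · have hA := lower_piece
              (F := fun t => (f t - f (t + 1/(2*(k:ℝ)))) * Real.sin (2*π*(k:ℝ)*t)) (K := U/2*sθ)
              (by positivity : (0:ℝ) ≤ β/4) (by linarith [hβpos]) he2 iG hG_nn hband_G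
            have hB : 0 ≤ ∫ u in e..(1/(2*(k:ℝ))), f u * Real.sin (2*π*(k:ℝ)*u) :=
              intervalIntegral.integral_nonneg heh (fun u hu => by
                have := hF_nn u (le_trans he0 hu.1) hu.2
                simpa only [hFdef] using this)
            calc β/4 * (U/2*sθ) = (β/2 - β/4) * (U/2*sθ) := by ring
              _ ≤ _ := by linarith [hA, hB]
          · have hA := lower_piece
              (F := fun t => (f t - f (t + 1/(2*(k:ℝ)))) * Real.sin (2*π*(k:ℝ)*t)) (K := U/2*sθ)
              (by positivity : (0:ℝ) ≤ β/4) he1.le le_rfl iG hG_nn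
              (fun u hu => hband_G u ⟨hu.1, hu.2.trans he2.le⟩)
            have hB := lower_piece (F := fun s => f s * Real.sin (2*π*(k:ℝ)*s)) (K := U/2*sθ)
              le_rfl he2.le hβ2b (by simpa only [hFdef] using iB)
              (fun u hu => by
                have := hF_nn u (le_trans he0 hu.1) hu.2
                simpa only [hFdef] using this)
              (fun u hu => by
                have := hband_F u ⟨he1.le.trans hu.1, hu.2⟩
                simpa only [hFdef] using this)
            calc β/4 * (U/2*sθ) = (e - β/4) * (U/2*sθ) + (β/2 - e) * (U/2*sθ) := by ring
              _ ≤ _ := by linarith [hA, hB]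
    have hsplit : ∫ s in (0:ℝ)..δ, F s = (∫ s in (0:ℝ)..b₁, F s) + ∫ s in b₁..δ, F s :=
      (intervalIntegral.integral_add_adjacent_intervals hFIIb₁
        (sub_II hFII hb₁pos.le hb₁δ le_rfl)).symm
    have harith : c/8 * sθ ≤ β/4 * (U/2*sθ) := by
      have e1 : β * β^(-1-α:ℝ) = β^(-α:ℝ) := by
        nth_rewrite 1 [← Real.rpow_one β]
        rw [← Real.rpow_add hβpos]
        ring_nf
      have e2 : δ^(-α:ℝ) ≤ β^(-α:ℝ) :=
        Real.rpow_le_rpow_of_nonpos hβpos hβδ (by linarith [hα.1])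
      have e3 : δ^(α-1) * δ^(-α:ℝ) = δ⁻¹ := by
        rw [← Real.rpow_add hδ0, ← Real.rpow_neg_one δ]
        ring_nf
      have e4 : (1:ℝ) ≤ δ⁻¹ := by
        rw [← one_div, le_div_iff₀ hδ0]; linarith
      have key : (1:ℝ) ≤ δ^(α-1) * β^(-α:ℝ) := by
        calc (1:ℝ) ≤ δ⁻¹ := e4
          _ = δ^(α-1) * δ^(-α:ℝ) := e3.symm
          _ ≤ δ^(α-1) * β^(-α:ℝ) := by nlinarith [hδpow]
      have expand : β/4 * (U/2*sθ) = c/8 * sθ * (δ^(α-1) * (β * β^(-1-α:ℝ))) := by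
        rw [hUdef]; ring
      rw [expand, e1]
      nlinarith [key, mul_pos hc hsθpos]
    have hfin : c/8*sθ ≤ ∫ s in (0:ℝ)..δ, F s := by
      rw [hsplit]; linarith [hfront, htail, harith]
    linarith [hfin]
end

section
/- For 1-periodic square-integrable u with ρ_δ even, supported in (−δ,δ), and ρ_δ(|s|)/|s| integrable, the nonlocal Dirichlet integral admits the representation E_δ(u) = ∫_Ω |G_δ u(x)|² dx = ∫_Ω ∫_{(−δ,δ)²} (ρ_δ(|s|)ρ_δ(|t|)/(2st)) [u(x+s+t) − u(x)]² ds dt dx. -/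
open MeasureTheory Set Real

/-! ### Auxiliary lemmas -/

lemma ddif_restrict_Ioo_eq_Ioc : (volume : Measure ℝ).restrict (Ioo (0:ℝ) 1)
    = (volume : Measure ℝ).restrict (Ioc (0:ℝ) 1) :=
  Measure.restrict_congr_set Ioo_ae_eq_Ioc

set_option maxHeartbeats 1000000 in
lemma ddif_integrableOn_Ioc {f : ℝ → ℝ} (hper : Function.Periodic f 1)
    (hf : IntegrableOn f (Ioc (0:ℝ) 1)) (a : ℝ) : IntegrableOn f (Ioc a (a+1)) := by
  haveI : VAddInvariantMeasure (AddSubgroup.zmultiples (1:ℝ)) ℝ volume :=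
    ⟨fun c s _ => measure_preimage_add _ _ _⟩
  have h1 := isAddFundamentalDomain_Ioc (T := 1) one_pos a (μ := volume)
  have h0 := isAddFundamentalDomain_Ioc (T := 1) one_pos 0 (μ := volume)
  have := IsAddFundamentalDomain.integrableOn_iff (G := AddSubgroup.zmultiples (1:ℝ)) h1 h0
      (f := f) hper.map_vadd_zmultiples
  rw [this]
  simpa using hf

lemma ddif_setIntegral_comp_add (f : ℝ → ℝ) (a : ℝ) :
    ∫ x in Ioc (0:ℝ) 1, f (x + a) = ∫ x in Ioc a (a+1), f x := by
  have := (measurePreserving_add_right volume a).setIntegral_preimage_emb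
    (measurableEmbedding_addRight a) f (Ioc a (a+1))
  rw [← this]
  congr 1
  rw [preimage_add_const_Ioc]
  norm_num

lemma ddif_integrableOn_comp_add (f : ℝ → ℝ) (a : ℝ) (hf : IntegrableOn f (Ioc a (a+1))) :
    IntegrableOn (fun x => f (x + a)) (Ioc (0:ℝ) 1) := by
  have h := (measurePreserving_add_right volume a).integrableOn_comp_preimage
    (measurableEmbedding_addRight a) (f := f) (s := Ioc a (a+1))
  rw [show ((· + a) ⁻¹' Ioc a (a+1)) = Ioc (0:ℝ) 1 by rw [preimage_add_const_Ioc]; norm_num] at h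
  exact h.mpr hf

lemma ddif_shift_integral {f : ℝ → ℝ} (hper : Function.Periodic f 1) (a : ℝ) :
    ∫ x in Ioc (0:ℝ) 1, f (x + a) = ∫ x in Ioc (0:ℝ) 1, f x := by
  rw [ddif_setIntegral_comp_add]
  have h1 : ∫ x in Ioc a (a+1), f x = ∫ x in a..(a+1), f x := by
    rw [intervalIntegral.integral_of_le (by linarith)]
  have h2 : ∫ x in Ioc (0:ℝ) 1, f x = ∫ x in (0:ℝ)..1, f x := by
    rw [intervalIntegral.integral_of_le (by linarith)]
  rw [h1, h2]
  simpa using hper.intervalIntegral_add_eq a 0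

lemma ddif_shift_integrableOn {f : ℝ → ℝ} (hper : Function.Periodic f 1)
    (hf : IntegrableOn f (Ioc (0:ℝ) 1)) (a : ℝ) :
    IntegrableOn (fun x => f (x + a)) (Ioc (0:ℝ) 1) :=
  ddif_integrableOn_comp_add f a (ddif_integrableOn_Ioc hper hf a)

lemma ddif_fract_preimage_null {S : Set ℝ} (hS : MeasurableSet S) (hS0 : volume S = 0) :
    volume (Int.fract ⁻¹' S) = 0 := by
  have hsub : Int.fract ⁻¹' S ⊆ ⋃ n : ℤ, (fun y : ℝ => y + (n:ℝ)) '' S := by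
    intro x hx
    refine mem_iUnion.2 ⟨⌊x⌋, ⟨Int.fract x, hx, ?_⟩⟩
    simp only [Int.fract]
    ring
  refine measure_mono_null hsub (measure_iUnion_null fun n => ?_)
  have himg : (fun y : ℝ => y + (n:ℝ)) '' S = (fun y : ℝ => y + (-(n:ℝ))) ⁻¹' S := by
    ext x
    constructor
    · rintro ⟨y, hy, rfl⟩; simpa using hy
    · intro h; exact ⟨x + (-(n:ℝ)), h, by ring⟩
  rw [himg]
  rw [(measurePreserving_add_right volume (-(n:ℝ))).measure_preimage hS.nullMeasurableSet]
  exact hS0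

lemma ddif_exists_rep {u : ℝ → ℝ} (hper : Function.Periodic u 1)
    (hL2 : MemLp u 2 (volume.restrict (Ioo (0:ℝ) 1))) :
    ∃ v : ℝ → ℝ, Measurable v ∧ Function.Periodic v 1 ∧ v =ᵐ[(volume : Measure ℝ)] u := by
  obtain ⟨g, hgm, hg⟩ := hL2.1
  have hae : ∀ᵐ y ∂(volume.restrict (Ioo (0:ℝ) 1)), u y = g y := hg
  obtain ⟨N, hNsub, hNm, hN0⟩ :=
    exists_measurable_superset_of_null (ae_iff.1 hae)
  rw [Measure.restrict_apply₀' measurableSet_Ioo.nullMeasurableSet] at hN0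
  set S : Set ℝ := (N ∩ Ioo 0 1) ∪ {0} ∪ {1} with hSdef
  have hSm : MeasurableSet S :=
    ((hNm.inter measurableSet_Ioo).union (measurableSet_singleton 0)).union
      (measurableSet_singleton 1)
  have hS0 : volume S = 0 := by
    refine measure_union_null (measure_union_null hN0 ?_) ?_ <;> simp
  refine ⟨fun x => g (Int.fract x), hgm.measurable.comp measurable_fract, ?_, ?_⟩
  · intro x
    simp [Int.fract_add_intCast x 1]
  · have hnull := ddif_fract_preimage_null hSm hS0
    refine measure_mono_null ?_ hnull
    intro x hx
    simp only [Set.mem_setOf_eq] at hx ⊢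
    by_contra hxS
    apply hx
    have hfr : Int.fract x ∉ S := hxS
    have h01 : Int.fract x ∈ Ioo (0:ℝ) 1 := by
      have h1 := Int.fract_nonneg x
      have h2 := Int.fract_lt_one x
      rcases eq_or_lt_of_le h1 with h | h
      · exact absurd (by simp [hSdef, ← h]) hfr
      · exact ⟨h, h2⟩
    have hxN : Int.fract x ∉ N := fun hmem => hfr (by simp [hSdef, hmem, h01])
    have hgu : u (Int.fract x) = g (Int.fract x) := by
      by_contra hne
      exact hxN (hNsub (by simp [hne]))
    have hux : u (Int.fract x) = u x := by
      have h' := hper.sub_int_mul_eq (x := x) ⌊x⌋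
      rw [mul_one] at h'
      exact h'
    show g (Int.fract x) = u x
    rw [← hgu, hux]

lemma ddif_k_eq (ρ : ℝ → ℝ) (s : ℝ) (w : ℝ) : ρ |s| * w / s = (ρ |s| / s) * w :=
  mul_div_right_comm _ _ _

lemma ddif_kk_eq (ρ : ℝ → ℝ) (s t : ℝ) :
    ρ |s| * ρ |t| / (2 * s * t) = (ρ |s| / s) * (ρ |t| / t) / 2 := by
  rcases eq_or_ne s 0 with rfl | hs
  · simp
  rcases eq_or_ne t 0 with rfl | ht
  · simp
  rw [div_mul_div_comm, div_div]
  ring_nf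

lemma ddif_k_odd (ρ : ℝ → ℝ) (s : ℝ) : ρ |(-s)| / (-s) = -(ρ |s| / s) := by
  rw [abs_neg, div_neg]

lemma ddif_map_neg_restrict {δ : ℝ} :
    Measure.map Neg.neg ((volume : Measure ℝ).restrict (Ioo (-δ) δ))
      = (volume : Measure ℝ).restrict (Ioo (-δ) δ) := by
  have h1 : (Neg.neg : ℝ → ℝ) ⁻¹' (Ioo (-δ) δ) = Ioo (-δ) δ := by
    ext x
    simp only [Set.mem_preimage, Set.mem_Ioo]
    constructor <;> intro h <;> exact ⟨by linarith [h.2], by linarith [h.1]⟩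
  conv_rhs => rw [← Measure.map_neg_eq_self (volume : Measure ℝ),
    Measure.restrict_map measurable_neg measurableSet_Ioo, h1]

lemma ddif_qmp_neg {δ : ℝ} :
    Measure.QuasiMeasurePreserving (Neg.neg : ℝ → ℝ)
      ((volume : Measure ℝ).restrict (Ioo (-δ) δ))
      ((volume : Measure ℝ).restrict (Ioo (-δ) δ)) :=
  ⟨measurable_neg, by rw [ddif_map_neg_restrict]⟩

set_option maxHeartbeats 1000000 in
lemma ddif_exists_k {ρ : ℝ → ℝ} {δ : ℝ} (hδ : 0 < δ)
    (hint : IntegrableOn (fun s => ρ |s| / |s|) (Ioo (-δ) δ)) :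
    ∃ k : ℝ → ℝ, Measurable k ∧ (∀ s, k (-s) = - k s)
      ∧ (fun s => ρ |s| / s) =ᵐ[(volume : Measure ℝ).restrict (Ioo (-δ) δ)] k
      ∧ IntegrableOn k (Ioo (-δ) δ) := by
  set I := Ioo (-δ) δ with hI
  set k₀ : ℝ → ℝ := fun s => ρ |s| / s with hk₀
  have hk₀eq : k₀ = fun s => (ρ |s| / |s|) * (|s| / s) := by
    funext s
    rcases eq_or_ne s 0 with rfl | hs
    · simp [hk₀]
    · have : |s| ≠ 0 := abs_ne_zero.2 hs
      show ρ |s| / s = ρ |s| / |s| * (|s| / s)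
      rw [div_mul_div_comm, mul_comm (ρ |s|) |s|, mul_div_mul_left _ _ this]
  have hk₀m : AEStronglyMeasurable k₀ (volume.restrict I) := by
    rw [hk₀eq]
    exact hint.1.mul ((measurable_abs.div measurable_id).aestronglyMeasurable)
  have hk₀int : IntegrableOn k₀ I := by
    refine Integrable.mono' hint.abs hk₀m (Filter.Eventually.of_forall fun s => ?_)
    rw [hk₀eq]
    show abs (ρ |s| / |s| * (|s| / s)) ≤ abs (ρ |s| / |s|)
    rw [abs_mul]
    have hb : abs (|s| / s) ≤ 1 := by
      rcases eq_or_ne s 0 with rfl | hs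
      · simp
      · rw [abs_div, abs_abs, div_self (abs_ne_zero.2 hs)]
    calc abs (ρ |s| / |s|) * abs (|s| / s) ≤ abs (ρ |s| / |s|) * 1 :=
          mul_le_mul_of_nonneg_left hb (abs_nonneg _)
      _ = abs (ρ |s| / |s|) := mul_one _
  obtain ⟨g, hgm, hg⟩ := hk₀m
  set k : ℝ → ℝ := fun s => if s ∈ I then (g s - g (-s))/2 else 0 with hk
  have hkm : Measurable k := by
    refine Measurable.ite measurableSet_Ioo ?_ measurable_const
    exact ((hgm.measurable.sub (hgm.measurable.comp measurable_neg)).div_const 2)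
  have hIneg : ∀ s : ℝ, (-s ∈ I) ↔ (s ∈ I) := by
    intro s; constructor <;> intro h <;>
      exact ⟨by linarith [h.2], by linarith [h.1]⟩
  have hkodd : ∀ s, k (-s) = - k s := by
    intro s
    by_cases h : s ∈ I
    · rw [hk]; simp only [(hIneg s).2 h, h, if_pos, neg_neg]; ring
    · have h' : ¬ (-s ∈ I) := fun hc => h ((hIneg s).1 hc)
      simp [hk, h, h']
  have hgneg : (fun s => k₀ (-s)) =ᵐ[volume.restrict I] (fun s => g (-s)) :=
    (ddif_qmp_neg (δ := δ)).ae_eq_comp hg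
  have hkeq : k₀ =ᵐ[volume.restrict I] k := by
    have hIae : ∀ᵐ s ∂(volume.restrict I), s ∈ I :=
      ae_restrict_mem measurableSet_Ioo
    filter_upwards [hg, hgneg, hIae] with s h1 h2 h3
    have hneg : k₀ (-s) = - k₀ s := ddif_k_odd ρ s
    rw [hk]
    simp only [h3, if_pos]
    rw [← h1, ← h2, hneg]
    ring
  exact ⟨k, hkm, hkodd, hkeq, hk₀int.congr_fun_ae hkeq⟩

lemma ddif_integral_odd {δ : ℝ} {k : ℝ → ℝ} (hkm : Measurable k)
    (hodd : ∀ s, k (-s) = - k s) :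
    ∫ s in Ioo (-δ) δ, k s = 0 := by
  have h1 : ∫ s in Ioo (-δ) δ, k s = ∫ s in Ioo (-δ) δ, k (-s) := by
    conv_lhs => rw [← ddif_map_neg_restrict (δ := δ)]
    rw [integral_map measurable_neg.aemeasurable hkm.aestronglyMeasurable]
  have h2 : ∫ s in Ioo (-δ) δ, k (-s) = - ∫ s in Ioo (-δ) δ, k s := by
    simp only [hodd]
    exact integral_neg _
  linarith [h1, h2]

/-! ### facts about the periodic square-integrable function -/

lemma ddif_sq_per {v : ℝ → ℝ} (hvper : Function.Periodic v 1) :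
    Function.Periodic (fun x => v x ^ 2) 1 := fun x => by simp [hvper x]

lemma ddif_mulper {v : ℝ → ℝ} (hvper : Function.Periodic v 1) (c : ℝ) :
    Function.Periodic (fun x => v (x + c) * v x) 1 := by
  intro x
  simp only
  rw [show x + 1 + c = (x + c) + 1 by ring, hvper (x+c), hvper x]

lemma ddif_shift_sq {v : ℝ → ℝ} (hvper : Function.Periodic v 1)
    (hv2 : IntegrableOn (fun x => v x ^ 2) (Ioc (0:ℝ) 1)) (a : ℝ) :
    IntegrableOn (fun x => v (x + a) ^ 2) (Ioc (0:ℝ) 1) ∧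
    ∫ x in Ioc (0:ℝ) 1, v (x + a) ^ 2 = ∫ x in Ioc (0:ℝ) 1, v x ^ 2 :=
  ⟨ddif_shift_integrableOn (ddif_sq_per hvper) hv2 a,
   ddif_shift_integral (ddif_sq_per hvper) a⟩

lemma ddif_prod_int {v : ℝ → ℝ} (hv : Measurable v) (hvper : Function.Periodic v 1)
    (hv2 : IntegrableOn (fun x => v x ^ 2) (Ioc (0:ℝ) 1)) (a b : ℝ) :
    IntegrableOn (fun x => v (x + a) * v (x + b)) (Ioc (0:ℝ) 1) := by
  have h1 := (ddif_shift_sq hvper hv2 a).1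
  have h2 := (ddif_shift_sq hvper hv2 b).1
  refine Integrable.mono' (((h1.add h2).div_const 2))
    ((((hv.comp (measurable_id.add_const a)).mul
      (hv.comp (measurable_id.add_const b)))).aestronglyMeasurable)
    (Filter.Eventually.of_forall fun x => ?_)
  simp only [Real.norm_eq_abs, Pi.add_apply]
  rw [abs_mul]
  nlinarith [sq_nonneg (|v (x+a)| - |v (x+b)|), sq_abs (v (x+a)), sq_abs (v (x+b)),
    abs_nonneg (v (x+a)), abs_nonneg (v (x+b))]

lemma ddif_prod_bound {v : ℝ → ℝ} (hv : Measurable v) (hvper : Function.Periodic v 1)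
    (hv2 : IntegrableOn (fun x => v x ^ 2) (Ioc (0:ℝ) 1)) (a b : ℝ) :
    ∫ x in Ioc (0:ℝ) 1, |v (x + a) * v (x + b)| ≤ ∫ x in Ioc (0:ℝ) 1, v x ^ 2 := by
  have h1 := (ddif_shift_sq hvper hv2 a)
  have h2 := (ddif_shift_sq hvper hv2 b)
  have hle : ∀ x, |v (x + a) * v (x + b)| ≤ (v (x+a)^2 + v (x+b)^2)/2 := by
    intro x
    rw [abs_mul]
    nlinarith [sq_nonneg (|v (x+a)| - |v (x+b)|), sq_abs (v (x+a)), sq_abs (v (x+b)),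
      abs_nonneg (v (x+a)), abs_nonneg (v (x+b))]
  calc ∫ x in Ioc (0:ℝ) 1, |v (x + a) * v (x + b)|
      ≤ ∫ x in Ioc (0:ℝ) 1, (v (x+a)^2 + v (x+b)^2)/2 := by
        refine setIntegral_mono_on ((ddif_prod_int hv hvper hv2 a b).abs)
          ((h1.1.add h2.1).div_const 2) measurableSet_Ioc (fun x _ => hle x)
    _ = ((∫ x in Ioc (0:ℝ) 1, v (x+a)^2) + ∫ x in Ioc (0:ℝ) 1, v (x+b)^2)/2 := by
        rw [integral_div, integral_add h1.1 h2.1]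
    _ = ∫ x in Ioc (0:ℝ) 1, v x ^ 2 := by rw [h1.2, h2.2]; ring

lemma ddif_corr {v : ℝ → ℝ} (hvper : Function.Periodic v 1) (a b : ℝ) :
    ∫ x in Ioc (0:ℝ) 1, v (x + a) * v (x + b)
      = ∫ x in Ioc (0:ℝ) 1, v (x + (a - b)) * v x := by
  have h := ddif_shift_integral (f := fun x => v (x + (a-b)) * v x) (ddif_mulper hvper (a-b)) b
  rw [← h]
  refine integral_congr_ae (Filter.Eventually.of_forall fun x => ?_)
  simp only
  rw [show x + b + (a - b) = x + a by ring]

lemma ddif_prod_int0 {v : ℝ → ℝ} (hv : Measurable v) (hvper : Function.Periodic v 1)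
    (hv2 : IntegrableOn (fun x => v x ^ 2) (Ioc (0:ℝ) 1)) (a : ℝ) :
    IntegrableOn (fun x => v (x + a) * v x) (Ioc (0:ℝ) 1) := by
  have h := ddif_prod_int hv hvper hv2 a 0
  simpa using h

lemma ddif_sqint {v : ℝ → ℝ} (hv2 : IntegrableOn (fun x => v x ^ 2) (Ioc (0:ℝ) 1)) :
    IntegrableOn (fun x => v x * v x) (Ioc (0:ℝ) 1) := by
  have := hv2
  simpa [pow_two] using this

lemma ddif_cross {v : ℝ → ℝ} (hv : Measurable v) (hvper : Function.Periodic v 1)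
    (hv2 : IntegrableOn (fun x => v x ^ 2) (Ioc (0:ℝ) 1)) (s t : ℝ) :
    ∫ x in Ioc (0:ℝ) 1, (v (x + s) - v x) * (v (x + t) - v x)
      = (∫ x in Ioc (0:ℝ) 1, v (x + (s - t)) * v x)
        - (∫ x in Ioc (0:ℝ) 1, v (x + s) * v x)
        - (∫ x in Ioc (0:ℝ) 1, v (x + t) * v x)
        + ∫ x in Ioc (0:ℝ) 1, v x ^ 2 := by
  have h1 := ddif_prod_int hv hvper hv2 s t
  have h2 := ddif_prod_int0 hv hvper hv2 s
  have h3 := ddif_prod_int0 hv hvper hv2 t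
  have h4 := ddif_sqint (v := v) hv2
  have h12 : IntegrableOn (fun x => v (x+s) * v (x+t) - v (x+s) * v x) (Ioc (0:ℝ) 1) := h1.sub h2
  have h123 : IntegrableOn
    (fun x => v (x+s) * v (x+t) - v (x+s) * v x - v (x+t) * v x) (Ioc (0:ℝ) 1) := h12.sub h3
  have hrw : ∀ x : ℝ, (v (x + s) - v x) * (v (x + t) - v x)
      = v (x+s) * v (x+t) - v (x+s) * v x - v (x+t) * v x + v x * v x := fun x => by ring
  calc ∫ x in Ioc (0:ℝ) 1, (v (x + s) - v x) * (v (x + t) - v x)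
      = ∫ x in Ioc (0:ℝ) 1,
          (v (x+s) * v (x+t) - v (x+s) * v x - v (x+t) * v x + v x * v x) := by
        exact integral_congr_ae (Filter.Eventually.of_forall fun x => hrw x)
    _ = (∫ x in Ioc (0:ℝ) 1, v (x+s) * v (x+t)) - (∫ x in Ioc (0:ℝ) 1, v (x+s) * v x)
        - (∫ x in Ioc (0:ℝ) 1, v (x+t) * v x) + ∫ x in Ioc (0:ℝ) 1, v x * v x := by
        rw [integral_add h123 h4, integral_sub h12 h3, integral_sub h1 h2]
    _ = _ := by rw [ddif_corr hvper s t]; simp [pow_two]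

lemma ddif_cross_int {v : ℝ → ℝ} (hv : Measurable v) (hvper : Function.Periodic v 1)
    (hv2 : IntegrableOn (fun x => v x ^ 2) (Ioc (0:ℝ) 1)) (s t : ℝ) :
    IntegrableOn (fun x => (v (x + s) - v x) * (v (x + t) - v x)) (Ioc (0:ℝ) 1) := by
  have h1 := ddif_prod_int hv hvper hv2 s t
  have h2 := ddif_prod_int0 hv hvper hv2 s
  have h3 := ddif_prod_int0 hv hvper hv2 t
  have h4 := ddif_sqint (v := v) hv2
  have h12 : IntegrableOn (fun x => v (x+s) * v (x+t) - v (x+s) * v x) (Ioc (0:ℝ) 1) := h1.sub h2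
  have h123 : IntegrableOn
    (fun x => v (x+s) * v (x+t) - v (x+s) * v x - v (x+t) * v x) (Ioc (0:ℝ) 1) := h12.sub h3
  have h1234 : IntegrableOn
    (fun x => v (x+s) * v (x+t) - v (x+s) * v x - v (x+t) * v x + v x * v x) (Ioc (0:ℝ) 1) :=
    h123.add h4
  refine h1234.congr (Filter.Eventually.of_forall fun x => ?_)
  ring

lemma ddif_cross_bound {v : ℝ → ℝ} (hv : Measurable v) (hvper : Function.Periodic v 1)
    (hv2 : IntegrableOn (fun x => v x ^ 2) (Ioc (0:ℝ) 1)) (s t : ℝ) :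
    ∫ x in Ioc (0:ℝ) 1, |(v (x + s) - v x) * (v (x + t) - v x)|
      ≤ 4 * ∫ x in Ioc (0:ℝ) 1, v x ^ 2 := by
  have h1 := ddif_prod_int hv hvper hv2 s t
  have h2 := ddif_prod_int0 hv hvper hv2 s
  have h3 := ddif_prod_int0 hv hvper hv2 t
  have h4 := ddif_sqint (v := v) hv2
  have hb1 := ddif_prod_bound hv hvper hv2 s t
  have hb2 : ∫ x in Ioc (0:ℝ) 1, |v (x + s) * v x| ≤ ∫ x in Ioc (0:ℝ) 1, v x ^ 2 := by
    have := ddif_prod_bound hv hvper hv2 s 0; simpa using this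
  have hb3 : ∫ x in Ioc (0:ℝ) 1, |v (x + t) * v x| ≤ ∫ x in Ioc (0:ℝ) 1, v x ^ 2 := by
    have := ddif_prod_bound hv hvper hv2 t 0; simpa using this
  have hb4 : ∫ x in Ioc (0:ℝ) 1, |v x * v x| ≤ ∫ x in Ioc (0:ℝ) 1, v x ^ 2 := by
    have := ddif_prod_bound hv hvper hv2 0 0; simpa using this
  have hcross_int := ddif_cross_int hv hvper hv2 s t
  have ha12 : IntegrableOn
    (fun x => |v (x+s) * v (x+t)| + |v (x+s) * v x|) (Ioc (0:ℝ) 1) := h1.abs.add h2.abs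
  have ha123 : IntegrableOn
    (fun x => |v (x+s) * v (x+t)| + |v (x+s) * v x| + |v (x+t) * v x|) (Ioc (0:ℝ) 1) :=
    ha12.add h3.abs
  have ha1234 : IntegrableOn
    (fun x => |v (x+s) * v (x+t)| + |v (x+s) * v x| + |v (x+t) * v x| + |v x * v x|)
    (Ioc (0:ℝ) 1) := ha123.add h4.abs
  have hple : ∀ x : ℝ, |(v (x + s) - v x) * (v (x + t) - v x)|
      ≤ |v (x+s) * v (x+t)| + |v (x+s) * v x| + |v (x+t) * v x| + |v x * v x| := by
    intro x
    have habs : |(v (x + s) - v x) * (v (x + t) - v x)|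
        ≤ (|v (x+s)| + |v x|) * (|v (x+t)| + |v x|) := by
      rw [abs_mul]
      exact mul_le_mul (abs_sub _ _) (abs_sub _ _) (abs_nonneg _) (by positivity)
    calc |(v (x + s) - v x) * (v (x + t) - v x)|
        ≤ (|v (x+s)| + |v x|) * (|v (x+t)| + |v x|) := habs
      _ = |v (x+s) * v (x+t)| + |v (x+s) * v x| + |v (x+t) * v x| + |v x * v x| := by
          rw [abs_mul, abs_mul, abs_mul, abs_mul]; ring
  calc ∫ x in Ioc (0:ℝ) 1, |(v (x + s) - v x) * (v (x + t) - v x)|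
      ≤ ∫ x in Ioc (0:ℝ) 1,
          (|v (x+s) * v (x+t)| + |v (x+s) * v x| + |v (x+t) * v x| + |v x * v x|) := by
        exact setIntegral_mono_on hcross_int.abs ha1234 measurableSet_Ioc (fun x _ => hple x)
    _ = (∫ x in Ioc (0:ℝ) 1, |v (x+s) * v (x+t)|) + (∫ x in Ioc (0:ℝ) 1, |v (x+s) * v x|)
        + (∫ x in Ioc (0:ℝ) 1, |v (x+t) * v x|) + ∫ x in Ioc (0:ℝ) 1, |v x * v x| := by
        rw [integral_add ha123 h4.abs, integral_add ha12 h3.abs, integral_add h1.abs h2.abs]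
    _ ≤ 4 * ∫ x in Ioc (0:ℝ) 1, v x ^ 2 := by linarith

lemma ddif_sq_shift_int {v : ℝ → ℝ} (hv : Measurable v) (hvper : Function.Periodic v 1)
    (hv2 : IntegrableOn (fun x => v x ^ 2) (Ioc (0:ℝ) 1)) (a : ℝ) :
    IntegrableOn (fun x => (v (x + a) - v x) ^ 2) (Ioc (0:ℝ) 1) := by
  have := ddif_cross_int hv hvper hv2 a a
  refine this.congr (Filter.Eventually.of_forall fun x => ?_)
  simp only [pow_two]

lemma ddif_sq_shift_val {v : ℝ → ℝ} (hv : Measurable v) (hvper : Function.Periodic v 1)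
    (hv2 : IntegrableOn (fun x => v x ^ 2) (Ioc (0:ℝ) 1)) (a : ℝ) :
    ∫ x in Ioc (0:ℝ) 1, (v (x + a) - v x) ^ 2
      = 2 * (∫ x in Ioc (0:ℝ) 1, v x ^ 2) - 2 * ∫ x in Ioc (0:ℝ) 1, v (x + a) * v x := by
  have h := ddif_cross hv hvper hv2 a a
  have h0 : ∫ x in Ioc (0:ℝ) 1, v (x + (a - a)) * v x = ∫ x in Ioc (0:ℝ) 1, v x ^ 2 := by
    simp [pow_two]
  have hsq : ∫ x in Ioc (0:ℝ) 1, (v (x + a) - v x) ^ 2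
      = ∫ x in Ioc (0:ℝ) 1, (v (x + a) - v x) * (v (x + a) - v x) := by
    refine integral_congr_ae (Filter.Eventually.of_forall fun x => ?_)
    simp only [pow_two]
  rw [hsq, h, h0]
  ring

/-! ### lemmas on the kernel side -/

lemma ddif_C_meas {v : ℝ → ℝ} (hv : Measurable v) :
    StronglyMeasurable (fun a => ∫ x in Ioc (0:ℝ) 1, v (x + a) * v x) := by
  have : StronglyMeasurable (fun q : ℝ × ℝ => v (q.2 + q.1) * v q.2) :=
    ((hv.comp (measurable_snd.add measurable_fst)).mul (hv.comp measurable_snd)).stronglyMeasurable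
  exact this.integral_prod_right'

lemma ddif_dom {δ : ℝ} {k : ℝ → ℝ} (hk : IntegrableOn k (Ioo (-δ) δ)) (hkm : Measurable k)
    {G : ℝ × ℝ → ℝ} (hG : AEStronglyMeasurable G
      (((volume : Measure ℝ).restrict (Ioo (-δ) δ)).prod
        ((volume : Measure ℝ).restrict (Ioo (-δ) δ))))
    {M : ℝ} (hGb : ∀ p, |G p| ≤ M) :
    Integrable (fun p : ℝ × ℝ => k p.1 * k p.2 * G p)
      (((volume : Measure ℝ).restrict (Ioo (-δ) δ)).prod
        ((volume : Measure ℝ).restrict (Ioo (-δ) δ))) := by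
  have hkk : Integrable (fun p : ℝ × ℝ => k p.1 * k p.2)
      (((volume : Measure ℝ).restrict (Ioo (-δ) δ)).prod
        ((volume : Measure ℝ).restrict (Ioo (-δ) δ))) :=
    hk.mul_prod hk
  refine Integrable.mono' (hkk.abs.mul_const M)
    ((((hkm.comp measurable_fst).mul (hkm.comp measurable_snd)).aestronglyMeasurable).mul hG)
    (Filter.Eventually.of_forall fun p => ?_)
  simp only [Real.norm_eq_abs, Pi.mul_apply]
  rw [abs_mul]
  exact mul_le_mul_of_nonneg_left (hGb p) (abs_nonneg _)

lemma ddif_zero1 {δ : ℝ} {k C : ℝ → ℝ} (hkm : Measurable k) (hodd : ∀ s, k (-s) = -k s) :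
    ∫ p : ℝ × ℝ, k p.1 * k p.2 * C p.1
      ∂(((volume : Measure ℝ).restrict (Ioo (-δ) δ)).prod
        ((volume : Measure ℝ).restrict (Ioo (-δ) δ))) = 0 := by
  have h : ∀ p : ℝ × ℝ, k p.1 * k p.2 * C p.1 = (k p.1 * C p.1) * k p.2 := fun p => by ring
  simp only [h]
  rw [integral_prod_mul (f := fun s => k s * C s) (g := k)]
  rw [ddif_integral_odd hkm hodd, mul_zero]

lemma ddif_zero2 {δ : ℝ} {k C : ℝ → ℝ} (hkm : Measurable k) (hodd : ∀ s, k (-s) = -k s) :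
    ∫ p : ℝ × ℝ, k p.1 * k p.2 * C p.2
      ∂(((volume : Measure ℝ).restrict (Ioo (-δ) δ)).prod
        ((volume : Measure ℝ).restrict (Ioo (-δ) δ))) = 0 := by
  have h : ∀ p : ℝ × ℝ, k p.1 * k p.2 * C p.2 = k p.1 * (k p.2 * C p.2) := fun p => by ring
  simp only [h]
  rw [integral_prod_mul (f := k) (g := fun t => k t * C t)]
  rw [ddif_integral_odd hkm hodd, zero_mul]

lemma ddif_zero3 {δ : ℝ} {k : ℝ → ℝ} (hkm : Measurable k) (hodd : ∀ s, k (-s) = -k s) (c : ℝ) :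
    ∫ p : ℝ × ℝ, k p.1 * k p.2 * c
      ∂(((volume : Measure ℝ).restrict (Ioo (-δ) δ)).prod
        ((volume : Measure ℝ).restrict (Ioo (-δ) δ))) = 0 := by
  have h : ∀ p : ℝ × ℝ, k p.1 * k p.2 * c = k p.1 * (k p.2 * c) := fun p => by ring
  simp only [h]
  rw [integral_prod_mul (f := k) (g := fun t => k t * c)]
  rw [ddif_integral_odd hkm hodd, zero_mul]

lemma ddif_reflect {δ : ℝ} {k C : ℝ → ℝ} (hkm : Measurable k) (hodd : ∀ s, k (-s) = -k s)
    (hCm : StronglyMeasurable C) (hk : IntegrableOn k (Ioo (-δ) δ))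
    {M : ℝ} (hCb : ∀ a, |C a| ≤ M) :
    ∫ p : ℝ × ℝ, k p.1 * k p.2 * C (p.1 - p.2)
      ∂(((volume : Measure ℝ).restrict (Ioo (-δ) δ)).prod
        ((volume : Measure ℝ).restrict (Ioo (-δ) δ)))
      = - ∫ p : ℝ × ℝ, k p.1 * k p.2 * C (p.1 + p.2)
      ∂(((volume : Measure ℝ).restrict (Ioo (-δ) δ)).prod
        ((volume : Measure ℝ).restrict (Ioo (-δ) δ))) := by
  have hGm1 : AEStronglyMeasurable (fun p : ℝ × ℝ => C (p.1 - p.2))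
      ((volume.restrict (Ioo (-δ) δ)).prod (volume.restrict (Ioo (-δ) δ))) :=
    (hCm.measurable.comp (measurable_fst.sub measurable_snd)).aestronglyMeasurable
  have hGm2 : AEStronglyMeasurable (fun p : ℝ × ℝ => C (p.1 + p.2))
      ((volume.restrict (Ioo (-δ) δ)).prod (volume.restrict (Ioo (-δ) δ))) :=
    (hCm.measurable.comp (measurable_fst.add measurable_snd)).aestronglyMeasurable
  have hint1 := ddif_dom hk hkm hGm1 (fun p => hCb _)
  have hint2 := ddif_dom hk hkm hGm2 (fun p => hCb _)
  rw [integral_prod _ hint1, integral_prod _ hint2]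
  rw [← integral_neg]
  refine integral_congr_ae (Filter.Eventually.of_forall fun s => ?_)
  simp only
  have hinner : ∫ t in Ioo (-δ) δ, k s * k t * C (s - t)
      = ∫ t in Ioo (-δ) δ, k s * k (-t) * C (s + t) := by
    conv_lhs => rw [← ddif_map_neg_restrict (δ := δ)]
    rw [integral_map measurable_neg.aemeasurable]
    · refine integral_congr_ae (Filter.Eventually.of_forall fun t => ?_)
      simp only [sub_neg_eq_add]
    · exact ((measurable_const.mul (hkm.comp measurable_id)).mul
        (hCm.measurable.comp ((measurable_const.sub measurable_id)))).aestronglyMeasurable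
  rw [hinner, ← integral_neg]
  refine integral_congr_ae (Filter.Eventually.of_forall fun t => ?_)
  simp only [hodd t]
  ring

/-! ### the theorem -/

/-- The 1D nonlocal gradient operator. -/
noncomputable def Gop (ρ : ℝ → ℝ) (δ : ℝ) (u : ℝ → ℝ) (x : ℝ) : ℝ :=
  ∫ s in Set.Ioo (-δ) δ, ρ |s| * (u (x + s) - u x) / s

theorem dirichlet_double_integral_form (ρ u : ℝ → ℝ) (δ : ℝ) (hδ : 0 < δ)
    (hper : Function.Periodic u 1)
    (hL2 : MemLp u 2 (volume.restrict (Ioo (0 : ℝ) 1)))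
    (hsupp : ∀ s, δ ≤ |s| → ρ |s| = 0)
    (hint : IntegrableOn (fun s => ρ |s| / |s|) (Ioo (-δ) δ)) :
    (∫ x in Ioo (0 : ℝ) 1, (Gop ρ δ u x) ^ 2)
      = ∫ x in Ioo (0 : ℝ) 1,
          ∫ p in (Ioo (-δ) δ) ×ˢ (Ioo (-δ) δ),
            ρ |p.1| * ρ |p.2| / (2 * p.1 * p.2) * (u (x + p.1 + p.2) - u x) ^ 2 := by
  classical
  obtain ⟨v, hv, hvper, hvu⟩ := ddif_exists_rep hper hL2
  have hv2 : IntegrableOn (fun x => v x ^ 2) (Ioc (0:ℝ) 1) := by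
    have h1 : Integrable (fun x => u x ^ 2) (volume.restrict (Ioo (0:ℝ) 1)) := hL2.integrable_sq
    have heq : (fun x => u x ^ 2) =ᵐ[(volume : Measure ℝ)] (fun x => v x ^ 2) := by
      filter_upwards [hvu] with x hx
      rw [hx]
    have h2 : Integrable (fun x => v x ^ 2) (volume.restrict (Ioo (0:ℝ) 1)) :=
      h1.congr (ae_restrict_of_ae heq)
    rw [IntegrableOn, ← ddif_restrict_Ioo_eq_Ioc]
    exact h2
  obtain ⟨k, hkm, hkodd, hk0k, hkint⟩ := ddif_exists_k hδ hint
  set ν : Measure (ℝ × ℝ) := ((volume : Measure ℝ).restrict (Ioo (-δ) δ)).prod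
    ((volume : Measure ℝ).restrict (Ioo (-δ) δ)) with hν
  set N : ℝ := ∫ x in Ioc (0:ℝ) 1, v x ^ 2 with hN
  set C : ℝ → ℝ := fun a => ∫ x in Ioc (0:ℝ) 1, v (x + a) * v x with hC
  have hCm : StronglyMeasurable C := ddif_C_meas hv
  have hCb : ∀ a, |C a| ≤ N := by
    intro a
    have h1 : |C a| ≤ ∫ x in Ioc (0:ℝ) 1, |v (x+a) * v x| := by
      simpa only [Real.norm_eq_abs] using
        norm_integral_le_integral_norm (μ := volume.restrict (Ioc (0:ℝ) 1))
        (f := fun x => v (x+a) * v x)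
    have h2 := ddif_prod_bound hv hvper hv2 a 0
    simp only [add_zero] at h2
    calc |C a| ≤ ∫ x in Ioc (0:ℝ) 1, |v (x+a) * v x| := h1
      _ ≤ N := by simpa using h2
  have hN0 : 0 ≤ N := by
    rw [hN]
    exact integral_nonneg fun x => sq_nonneg _
  -- a measurable null superset of {x | v x ≠ u x}
  obtain ⟨D, hDsub, hDm, hD0⟩ := exists_measurable_superset_of_null (ae_iff.1 hvu)
  have hslice1 : ∀ x : ℝ, (volume.restrict (Ioo (-δ) δ)) {s : ℝ | x + s ∈ D} = 0 := by
    intro x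
    have h1 : volume {s : ℝ | x + s ∈ D} = 0 := by
      have := (measurePreserving_add_left volume x).measure_preimage hDm.nullMeasurableSet
      rw [show (fun s : ℝ => x + s) ⁻¹' D = {s : ℝ | x + s ∈ D} from rfl] at this
      rw [this]; exact hD0
    exact le_antisymm (h1 ▸ Measure.restrict_apply_le _ _) (by simp)
  have hslice2 : ∀ x : ℝ, ν {p : ℝ × ℝ | x + p.1 + p.2 ∈ D} = 0 := by
    intro x
    have hSm : MeasurableSet {p : ℝ × ℝ | x + p.1 + p.2 ∈ D} :=
      ((measurable_const.add measurable_fst).add measurable_snd) hDm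
    rw [hν, Measure.prod_apply hSm]
    have hz : ∀ s : ℝ,
        (volume.restrict (Ioo (-δ) δ)) (Prod.mk s ⁻¹' {p : ℝ × ℝ | x + p.1 + p.2 ∈ D}) = 0 := by
      intro s
      have := hslice1 (x + s)
      rw [show Prod.mk s ⁻¹' {p : ℝ × ℝ | x + p.1 + p.2 ∈ D} = {t : ℝ | (x + s) + t ∈ D} from ?_]
      · exact this
      · ext t; simp [add_assoc]
    simp only [hz]
    simp
  have huveq : ∀ y : ℝ, y ∉ D → u y = v y := by
    intro y hy
    by_contra hne
    exact hy (hDsub (by simp only [Set.mem_setOf_eq]; exact fun h => hne h.symm))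
  -- STEP 1 : reduce LHS to v, k
  have hGop : ∀ᵐ x ∂(volume : Measure ℝ),
      Gop ρ δ u x = ∫ s in Ioo (-δ) δ, k s * (v (x + s) - v x) := by
    have hxu : ∀ᵐ x ∂(volume : Measure ℝ), u x = v x := by
      filter_upwards [hvu] with x hx using hx.symm
    filter_upwards [hxu] with x hx
    rw [Gop]
    refine integral_congr_ae ?_
    have hsae : ∀ᵐ s ∂(volume.restrict (Ioo (-δ) δ)), x + s ∉ D := by
      rw [ae_iff]
      simpa using hslice1 x
    filter_upwards [hk0k, hsae] with s h1 h2
    rw [ddif_k_eq, h1, huveq _ h2, hx]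
  have hLHS1 : (∫ x in Ioo (0:ℝ) 1, (Gop ρ δ u x) ^ 2)
      = ∫ x in Ioc (0:ℝ) 1, (∫ s in Ioo (-δ) δ, k s * (v (x + s) - v x)) ^ 2 := by
    rw [ddif_restrict_Ioo_eq_Ioc]
    refine integral_congr_ae (ae_restrict_of_ae ?_)
    filter_upwards [hGop] with x hx
    rw [hx]
  -- STEP 2 : reduce RHS to v, k
  have hkfst : (fun p : ℝ × ℝ => ρ |p.1| / p.1) =ᵐ[ν] (fun p => k p.1) :=
    Measure.quasiMeasurePreserving_fst.ae_eq_comp hk0k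
  have hksnd : (fun p : ℝ × ℝ => ρ |p.2| / p.2) =ᵐ[ν] (fun p => k p.2) :=
    Measure.quasiMeasurePreserving_snd.ae_eq_comp hk0k
  have hRHS1 : (∫ x in Ioo (0 : ℝ) 1, ∫ p in (Ioo (-δ) δ) ×ˢ (Ioo (-δ) δ),
        ρ |p.1| * ρ |p.2| / (2 * p.1 * p.2) * (u (x + p.1 + p.2) - u x) ^ 2)
      = ∫ x in Ioc (0:ℝ) 1, ∫ p : ℝ × ℝ,
          (k p.1 * k p.2 / 2) * (v (x + p.1 + p.2) - v x) ^ 2 ∂ν := by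
    rw [ddif_restrict_Ioo_eq_Ioc]
    refine integral_congr_ae (ae_restrict_of_ae ?_)
    have hxu : ∀ᵐ x ∂(volume : Measure ℝ), u x = v x := by
      filter_upwards [hvu] with x hx using hx.symm
    filter_upwards [hxu] with x hx
    rw [Measure.volume_eq_prod, ← Measure.prod_restrict, ← hν]
    refine integral_congr_ae ?_
    have hpae : ∀ᵐ p : ℝ × ℝ ∂ν, x + p.1 + p.2 ∉ D := by
      rw [ae_iff]
      simpa using hslice2 x
    filter_upwards [hkfst, hksnd, hpae] with p h1 h2 h3
    rw [ddif_kk_eq, h1, h2, huveq _ h3, hx]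
  -- STEP 3 : Fubini for the LHS
  have hLHS2 : ∫ x in Ioc (0:ℝ) 1, (∫ s in Ioo (-δ) δ, k s * (v (x + s) - v x)) ^ 2
      = ∫ p : ℝ × ℝ, k p.1 * k p.2 * (C (p.1 - p.2) - C p.1 - C p.2 + N) ∂ν := by
    set F : ℝ → ℝ × ℝ → ℝ := fun x p =>
      (k p.1 * (v (x + p.1) - v x)) * (k p.2 * (v (x + p.2) - v x)) with hF
    have hpt : ∀ x : ℝ, (∫ s in Ioo (-δ) δ, k s * (v (x + s) - v x)) ^ 2
        = ∫ p : ℝ × ℝ, F x p ∂ν := by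
      intro x
      rw [sq, hν, hF]
      exact (integral_prod_mul (μ := volume.restrict (Ioo (-δ) δ))
        (ν := volume.restrict (Ioo (-δ) δ))
        (f := fun s => k s * (v (x + s) - v x))
        (g := fun s => k s * (v (x + s) - v x))).symm
    have hFmeas : Measurable (Function.uncurry F) := by
      apply Measurable.mul
      · exact (hkm.comp (measurable_fst.comp measurable_snd)).mul
          ((hv.comp (measurable_fst.add (measurable_fst.comp measurable_snd))).sub
            (hv.comp measurable_fst))
      · exact (hkm.comp (measurable_snd.comp measurable_snd)).mul
          ((hv.comp (measurable_fst.add (measurable_snd.comp measurable_snd))).sub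
            (hv.comp measurable_fst))
    have hslice : ∀ p : ℝ × ℝ,
        Integrable (fun x => F x p) (volume.restrict (Ioc (0:ℝ) 1)) := by
      intro p
      have h := (ddif_cross_int hv hvper hv2 p.1 p.2).const_mul (k p.1 * k p.2)
      refine h.congr (Filter.Eventually.of_forall fun x => ?_)
      rw [hF]
      ring
    have hnormbd : ∀ p : ℝ × ℝ, (∫ x in Ioc (0:ℝ) 1, ‖F x p‖)
        ≤ |k p.1 * k p.2| * (4 * N) := by
      intro p
      have heq : (fun x => ‖F x p‖)
          = fun x => |k p.1 * k p.2| * |(v (x + p.1) - v x) * (v (x + p.2) - v x)| := by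
        funext x
        rw [hF]
        simp only [Real.norm_eq_abs]
        rw [show (k p.1 * (v (x + p.1) - v x)) * (k p.2 * (v (x + p.2) - v x))
          = (k p.1 * k p.2) * ((v (x + p.1) - v x) * (v (x + p.2) - v x)) by ring, abs_mul]
      rw [heq, integral_const_mul]
      refine mul_le_mul_of_nonneg_left ?_ (abs_nonneg _)
      rw [hN]
      exact ddif_cross_bound hv hvper hv2 p.1 p.2
    have hnormmL : AEStronglyMeasurable
        (fun p : ℝ × ℝ => ∫ x in Ioc (0:ℝ) 1, ‖F x p‖) ν := by
      refine (StronglyMeasurable.integral_prod_left'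
        (f := fun q : ℝ × (ℝ × ℝ) => ‖F q.1 q.2‖) ?_).aestronglyMeasurable
      exact hFmeas.norm.stronglyMeasurable
    have hFint : Integrable (Function.uncurry F)
        ((volume.restrict (Ioc (0:ℝ) 1)).prod ν) := by
      refine (integrable_prod_iff' hFmeas.aestronglyMeasurable).2
        ⟨Filter.Eventually.of_forall hslice, ?_⟩
      refine Integrable.mono' (((hkint.mul_prod hkint).abs.mul_const (4 * N)).congr
        (Filter.Eventually.of_forall fun p => rfl)) hnormmL
        (Filter.Eventually.of_forall fun p => ?_)
      rw [Real.norm_eq_abs, abs_of_nonneg (integral_nonneg fun x => norm_nonneg _)]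
      exact hnormbd p
    have hswap := integral_integral_swap (f := F) hFint
    have hinner : ∀ p : ℝ × ℝ, (∫ x in Ioc (0:ℝ) 1, F x p)
        = k p.1 * k p.2 * (C (p.1 - p.2) - C p.1 - C p.2 + N) := by
      intro p
      have h1 : (fun x => F x p) = fun x =>
          (k p.1 * k p.2) * ((v (x + p.1) - v x) * (v (x + p.2) - v x)) := by
        funext x; rw [hF]; ring
      rw [h1, integral_const_mul, ddif_cross hv hvper hv2 p.1 p.2]
    calc ∫ x in Ioc (0:ℝ) 1, (∫ s in Ioo (-δ) δ, k s * (v (x + s) - v x)) ^ 2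
        = ∫ x in Ioc (0:ℝ) 1, ∫ p : ℝ × ℝ, F x p ∂ν :=
          integral_congr_ae (Filter.Eventually.of_forall fun x => hpt x)
      _ = ∫ p : ℝ × ℝ, (∫ x in Ioc (0:ℝ) 1, F x p) ∂ν := hswap
      _ = _ := integral_congr_ae (Filter.Eventually.of_forall fun p => hinner p)
  -- STEP 4 : Fubini for the RHS
  have hRHS2 : (∫ x in Ioc (0:ℝ) 1, ∫ p : ℝ × ℝ,
        (k p.1 * k p.2 / 2) * (v (x + p.1 + p.2) - v x) ^ 2 ∂ν)
      = ∫ p : ℝ × ℝ, (k p.1 * k p.2 * N - k p.1 * k p.2 * C (p.1 + p.2)) ∂ν := by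
    set F : ℝ → ℝ × ℝ → ℝ := fun x p =>
      (k p.1 * k p.2 / 2) * (v (x + p.1 + p.2) - v x) ^ 2 with hF
    have hFmeas : Measurable (Function.uncurry F) := by
      apply Measurable.mul
      · exact ((hkm.comp (measurable_fst.comp measurable_snd)).mul
          (hkm.comp (measurable_snd.comp measurable_snd))).div_const 2
      · exact (((hv.comp ((measurable_fst.add (measurable_fst.comp measurable_snd)).add
          (measurable_snd.comp measurable_snd))).sub (hv.comp measurable_fst)).pow_const 2)
    have hslice : ∀ p : ℝ × ℝ,
        Integrable (fun x => F x p) (volume.restrict (Ioc (0:ℝ) 1)) := by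
      intro p
      have h := (ddif_sq_shift_int hv hvper hv2 (p.1 + p.2)).const_mul (k p.1 * k p.2 / 2)
      refine h.congr (Filter.Eventually.of_forall fun x => ?_)
      rw [hF]
      simp only [← add_assoc]
    have hval : ∀ p : ℝ × ℝ, (∫ x in Ioc (0:ℝ) 1, F x p)
        = (k p.1 * k p.2 / 2) * (2 * N - 2 * C (p.1 + p.2)) := by
      intro p
      have h1 : (fun x => F x p) = fun x =>
          (k p.1 * k p.2 / 2) * (v (x + (p.1 + p.2)) - v x) ^ 2 := by
        funext x; rw [hF]; rw [← add_assoc]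
      rw [h1, integral_const_mul, ddif_sq_shift_val hv hvper hv2 (p.1 + p.2)]
    have hnormbd : ∀ p : ℝ × ℝ, (∫ x in Ioc (0:ℝ) 1, ‖F x p‖)
        ≤ |k p.1 * k p.2| * (2 * N) := by
      intro p
      have heq : (fun x => ‖F x p‖)
          = fun x => |k p.1 * k p.2 / 2| * (v (x + (p.1 + p.2)) - v x) ^ 2 := by
        funext x
        rw [hF]
        simp only [Real.norm_eq_abs]
        rw [abs_mul, abs_of_nonneg (sq_nonneg (v (x + p.1 + p.2) - v x)), ← add_assoc]
      rw [heq, integral_const_mul, ddif_sq_shift_val hv hvper hv2 (p.1 + p.2)]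
      have hc := hCb (p.1 + p.2)
      have h2 : |k p.1 * k p.2 / 2| = |k p.1 * k p.2| / 2 := by
        rw [abs_div]
        norm_num
      rw [h2]
      have hCN : C (p.1 + p.2) ≥ -N := by
        have := abs_le.1 hc
        linarith [this.1]
      calc |k p.1 * k p.2| / 2 * (2 * N - 2 * (∫ x in Ioc (0:ℝ) 1, v (x + (p.1+p.2)) * v x))
          = |k p.1 * k p.2| / 2 * (2 * N - 2 * C (p.1 + p.2)) := by rw [hC]
        _ ≤ |k p.1 * k p.2| / 2 * (4 * N) := by
            refine mul_le_mul_of_nonneg_left (by linarith) (by positivity)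
        _ = |k p.1 * k p.2| * (2 * N) := by ring
    have hnormm : AEStronglyMeasurable
        (fun p : ℝ × ℝ => ∫ x in Ioc (0:ℝ) 1, ‖F x p‖) ν := by
      refine (StronglyMeasurable.integral_prod_left'
        (f := fun q : ℝ × (ℝ × ℝ) => ‖F q.1 q.2‖) ?_).aestronglyMeasurable
      exact hFmeas.norm.stronglyMeasurable
    have hFint : Integrable (Function.uncurry F)
        ((volume.restrict (Ioc (0:ℝ) 1)).prod ν) := by
      refine (integrable_prod_iff' hFmeas.aestronglyMeasurable).2
        ⟨Filter.Eventually.of_forall hslice, ?_⟩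
      refine Integrable.mono' ((hkint.mul_prod hkint).abs.mul_const (2 * N)) hnormm
        (Filter.Eventually.of_forall fun p => ?_)
      rw [Real.norm_eq_abs, abs_of_nonneg (integral_nonneg fun x => norm_nonneg _)]
      exact hnormbd p
    have hswap := integral_integral_swap (f := F) hFint
    calc (∫ x in Ioc (0:ℝ) 1, ∫ p : ℝ × ℝ, F x p ∂ν)
        = ∫ p : ℝ × ℝ, (∫ x in Ioc (0:ℝ) 1, F x p) ∂ν := hswap
      _ = _ := by
          refine integral_congr_ae (Filter.Eventually.of_forall fun p => ?_)
          show (∫ x in Ioc (0:ℝ) 1, F x p)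
            = k p.1 * k p.2 * N - k p.1 * k p.2 * C (p.1 + p.2)
          rw [hval p]
          ring
  -- STEP 5 : conclude
  rw [hLHS1, hLHS2, hRHS1, hRHS2]
  have hGm1 : AEStronglyMeasurable (fun p : ℝ × ℝ => C (p.1 - p.2)) ν :=
    (hCm.measurable.comp (measurable_fst.sub measurable_snd)).aestronglyMeasurable
  have hGm2 : AEStronglyMeasurable (fun p : ℝ × ℝ => C (p.1 + p.2)) ν :=
    (hCm.measurable.comp (measurable_fst.add measurable_snd)).aestronglyMeasurable
  have hGmf : AEStronglyMeasurable (fun p : ℝ × ℝ => C p.1) ν :=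
    (hCm.measurable.comp measurable_fst).aestronglyMeasurable
  have hGms : AEStronglyMeasurable (fun p : ℝ × ℝ => C p.2) ν :=
    (hCm.measurable.comp measurable_snd).aestronglyMeasurable
  have hi1 : Integrable (fun p : ℝ × ℝ => k p.1 * k p.2 * C (p.1 - p.2)) ν :=
    ddif_dom hkint hkm hGm1 (fun p => hCb _)
  have hi2 : Integrable (fun p : ℝ × ℝ => k p.1 * k p.2 * C p.1) ν :=
    ddif_dom hkint hkm hGmf (fun p => hCb _)
  have hi3 : Integrable (fun p : ℝ × ℝ => k p.1 * k p.2 * C p.2) ν :=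
    ddif_dom hkint hkm hGms (fun p => hCb _)
  have hi4 : Integrable (fun p : ℝ × ℝ => k p.1 * k p.2 * N) ν :=
    ddif_dom hkint hkm aestronglyMeasurable_const
      (fun p => (by rw [abs_of_nonneg hN0] : |N| ≤ N))
  have hi5 : Integrable (fun p : ℝ × ℝ => k p.1 * k p.2 * C (p.1 + p.2)) ν :=
    ddif_dom hkint hkm hGm2 (fun p => hCb _)
  have hsplitL : ∫ p : ℝ × ℝ, k p.1 * k p.2 * (C (p.1 - p.2) - C p.1 - C p.2 + N) ∂ν
      = (∫ p : ℝ × ℝ, k p.1 * k p.2 * C (p.1 - p.2) ∂ν)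
        - (∫ p : ℝ × ℝ, k p.1 * k p.2 * C p.1 ∂ν)
        - (∫ p : ℝ × ℝ, k p.1 * k p.2 * C p.2 ∂ν)
        + ∫ p : ℝ × ℝ, k p.1 * k p.2 * N ∂ν := by
    have h12 : Integrable
      (fun p : ℝ × ℝ => k p.1 * k p.2 * C (p.1 - p.2) - k p.1 * k p.2 * C p.1) ν := hi1.sub hi2
    have h123 : Integrable
      (fun p : ℝ × ℝ => k p.1 * k p.2 * C (p.1 - p.2) - k p.1 * k p.2 * C p.1
        - k p.1 * k p.2 * C p.2) ν := h12.sub hi3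
    calc ∫ p : ℝ × ℝ, k p.1 * k p.2 * (C (p.1 - p.2) - C p.1 - C p.2 + N) ∂ν
        = ∫ p : ℝ × ℝ, (k p.1 * k p.2 * C (p.1 - p.2) - k p.1 * k p.2 * C p.1
            - k p.1 * k p.2 * C p.2 + k p.1 * k p.2 * N) ∂ν := by
          refine integral_congr_ae (Filter.Eventually.of_forall fun p => ?_)
          ring
      _ = _ := by
          rw [integral_add h123 hi4, integral_sub h12 hi3, integral_sub hi1 hi2]
  have hsplitR : ∫ p : ℝ × ℝ, (k p.1 * k p.2 * N - k p.1 * k p.2 * C (p.1 + p.2)) ∂ν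
      = (∫ p : ℝ × ℝ, k p.1 * k p.2 * N ∂ν)
        - ∫ p : ℝ × ℝ, k p.1 * k p.2 * C (p.1 + p.2) ∂ν := integral_sub hi4 hi5
  rw [hsplitL, hsplitR, ddif_zero1 hkm hkodd, ddif_zero2 hkm hkodd, ddif_zero3 hkm hkodd,
    ddif_reflect hkm hkodd hCm hkint hCb]
  ring
end
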